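/- arXiv:1708.03591 — 3 statements merged into one kernel-verified Lean document; each statement's English description precedes it below -/
import Mathlib

section
/- Let G be a weighted directed graph on vertex set {1,…,N} with Laplacian L, suppose G has a rooted-out branch, and let w ∈ ℝ^N be the left eigenvector of the zero eigenvalue, i.e., w^T L = 0 with w ≠ 0. Then for q_0 ∈ ℝ^{nN}, one has (w^T ⊗ I_n) q_0 = 0 if and only if q_0 lies in the column space of L ⊗ I_n; equivalently, lim_{t→∞} exp(−t(L ⊗ I_n)) q_0 = 0 if and only if q_0 lies in the column space of L ⊗ I_n. -/
open scoped Kronecker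

/-- The Laplacian of the weighted directed graph on `Fin N` with weights `a`. -/
def graphLaplacian {N : ℕ} (a : Fin N → Fin N → ℝ) : Matrix (Fin N) (Fin N) ℝ :=
  Matrix.of fun i j => if i = j then ∑ k ∈ Finset.univ.erase i, a i k else -(a i j)

/-- `G` has a rooted-out branch: some vertex has a directed path to every other vertex
(information flows from `j` to `i` along an edge when `a i j > 0`). -/
def hasRootedOutBranch {N : ℕ} (a : Fin N → Fin N → ℝ) : Prop :=
  ∃ r : Fin N, ∀ v : Fin N, Relation.ReflTransGen (fun u v => 0 < a v u) r v

open Matrix NormedSpace Filter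

section basics
variable {N : ℕ} (a : Fin N → Fin N → ℝ)

lemma lap_mulVec_one : (graphLaplacian a).mulVec 1 = 0 := by
  funext i
  simp only [Matrix.mulVec, dotProduct, Pi.one_apply, mul_one, Pi.zero_apply]
  rw [← Finset.add_sum_erase _ _ (Finset.mem_univ i)]
  have h1 : graphLaplacian a i i = ∑ k ∈ Finset.univ.erase i, a i k := if_pos rfl
  have h2 : ∀ j ∈ Finset.univ.erase i, graphLaplacian a i j = -(a i j) := by
    intro j hj
    exact if_neg (Finset.ne_of_mem_erase hj).symm
  rw [h1, Finset.sum_congr rfl h2, Finset.sum_neg_distrib]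
  ring

end basics

section exps
variable {N : ℕ}

def entryLM (i j : Fin N) : Matrix (Fin N) (Fin N) ℝ →ₗ[ℝ] ℝ where
  toFun A := A i j
  map_add' A B := rfl
  map_smul' c A := rfl

def mulVecLM (x : Fin N → ℝ) : Matrix (Fin N) (Fin N) ℝ →ₗ[ℝ] (Fin N → ℝ) where
  toFun A := A.mulVec x
  map_add' A B := Matrix.add_mulVec A B x
  map_smul' c A := Matrix.smul_mulVec c A x

def vecMulLM (x : Fin N → ℝ) : Matrix (Fin N) (Fin N) ℝ →ₗ[ℝ] (Fin N → ℝ) where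
  toFun A := Matrix.vecMul x A
  map_add' A B := by simp [Matrix.vecMul_add]
  map_smul' c A := by
    funext j
    simp [Matrix.vecMul, dotProduct, Finset.mul_sum, mul_left_comm]

lemma exp_hasSum (M : Matrix (Fin N) (Fin N) ℝ) :
    HasSum (fun k : ℕ => (k.factorial⁻¹ : ℝ) • M ^ k) (exp M) := by
  letI : NormedRing (Matrix (Fin N) (Fin N) ℝ) := Matrix.linftyOpNormedRing
  letI : NormedAlgebra ℝ (Matrix (Fin N) (Fin N) ℝ) := Matrix.linftyOpNormedAlgebra
  exact exp_series_hasSum_exp' M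

lemma exp_map_hasSum {V : Type*} [AddCommGroup V] [Module ℝ V] [TopologicalSpace V]
    [IsTopologicalAddGroup V] [ContinuousSMul ℝ V]
    (M : Matrix (Fin N) (Fin N) ℝ) (f : Matrix (Fin N) (Fin N) ℝ →ₗ[ℝ] V) :
    HasSum (fun k : ℕ => (k.factorial⁻¹ : ℝ) • f (M ^ k)) (f (exp M)) := by
  letI : NormedRing (Matrix (Fin N) (Fin N) ℝ) := Matrix.linftyOpNormedRing
  letI : NormedAlgebra ℝ (Matrix (Fin N) (Fin N) ℝ) := Matrix.linftyOpNormedAlgebra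
  have hf : Continuous f := LinearMap.continuous_of_finiteDimensional f
  have h := (exp_hasSum M).map f.toAddMonoidHom hf
  simpa [Function.comp_def, _root_.map_smul] using h

end exps

section more
variable {N : ℕ}

lemma pow_entry_nonneg {M : Matrix (Fin N) (Fin N) ℝ} (hM : ∀ i j, 0 ≤ M i j) :
    ∀ (k : ℕ) (i j : Fin N), 0 ≤ (M ^ k) i j := by
  intro k
  induction k with
  | zero => intro i j; by_cases h : i = j <;> simp [pow_zero, Matrix.one_apply, h]
  | succ k ih =>
    intro i j
    rw [pow_succ, Matrix.mul_apply]
    exact Finset.sum_nonneg fun l _ => mul_nonneg (ih i l) (hM l j)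

lemma exp_entry_hasSum (M : Matrix (Fin N) (Fin N) ℝ) (i j : Fin N) :
    HasSum (fun k : ℕ => (k.factorial⁻¹ : ℝ) • (M ^ k) i j) ((exp M) i j) :=
  exp_map_hasSum M (entryLM i j)

lemma exp_entry_nonneg {M : Matrix (Fin N) (Fin N) ℝ} (hM : ∀ i j, 0 ≤ M i j) (i j : Fin N) :
    0 ≤ (exp M) i j :=
  (exp_entry_hasSum M i j).nonneg fun k => smul_nonneg (by positivity) (pow_entry_nonneg hM k i j)

lemma exp_entry_le {M : Matrix (Fin N) (Fin N) ℝ} (hM : ∀ i j, 0 ≤ M i j) (i j : Fin N) (k : ℕ) :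
    (k.factorial⁻¹ : ℝ) • (M ^ k) i j ≤ (exp M) i j :=
  le_hasSum (exp_entry_hasSum M i j) k fun k' _ =>
    smul_nonneg (by positivity) (pow_entry_nonneg hM k' i j)

lemma exp_mulVec_fixed {M : Matrix (Fin N) (Fin N) ℝ} {x : Fin N → ℝ}
    (hx : M.mulVec x = 0) : (exp M).mulVec x = x := by
  have hpow : ∀ k : ℕ, (k.factorial⁻¹ : ℝ) • (M ^ k).mulVec x
      = if k = 0 then x else 0 := by
    intro k
    cases k with
    | zero => simp
    | succ k =>
      have : (M ^ (k + 1)).mulVec x = 0 := by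
        rw [pow_succ, ← Matrix.mulVec_mulVec, hx, Matrix.mulVec_zero]
      simp [this]
  have h1 := exp_map_hasSum M (mulVecLM x)
  have h2 : HasSum (fun k : ℕ => (k.factorial⁻¹ : ℝ) • (M ^ k).mulVec x) x := by
    have := hasSum_single (f := fun k : ℕ => (k.factorial⁻¹ : ℝ) • (M ^ k).mulVec x) 0
      (by intro k hk; beta_reduce; rw [hpow k, if_neg hk])
    simpa using this
  have h1' : HasSum (fun k : ℕ => (k.factorial⁻¹ : ℝ) • (M ^ k).mulVec x)
      ((exp M).mulVec x) := h1
  exact (h2.unique h1').symm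

lemma exp_vecMul_fixed {M : Matrix (Fin N) (Fin N) ℝ} {x : Fin N → ℝ}
    (hx : Matrix.vecMul x M = 0) : Matrix.vecMul x (exp M) = x := by
  have hpow : ∀ k : ℕ, (k.factorial⁻¹ : ℝ) • Matrix.vecMul x (M ^ k)
      = if k = 0 then x else 0 := by
    intro k
    cases k with
    | zero => simp
    | succ k =>
      have : Matrix.vecMul x (M ^ (k + 1)) = 0 := by
        rw [pow_succ', ← Matrix.vecMul_vecMul, hx, Matrix.zero_vecMul]
      simp [this]
  have h1 : HasSum (fun k : ℕ => (k.factorial⁻¹ : ℝ) • Matrix.vecMul x (M ^ k))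
      (Matrix.vecMul x (exp M)) := exp_map_hasSum M (vecMulLM x)
  have h2 : HasSum (fun k : ℕ => (k.factorial⁻¹ : ℝ) • Matrix.vecMul x (M ^ k)) x := by
    have := hasSum_single (f := fun k : ℕ => (k.factorial⁻¹ : ℝ) • Matrix.vecMul x (M ^ k)) 0
      (by intro k hk; beta_reduce; rw [hpow k, if_neg hk])
    simpa using this
  exact (h2.unique h1).symm

lemma exp_smul_add (s t : ℝ) (M : Matrix (Fin N) (Fin N) ℝ) :
    exp ((s + t) • M) = exp (s • M) * exp (t • M) := by
  rw [add_smul]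
  exact Matrix.exp_add_of_commute _ _ ((Commute.refl M).smul_left s |>.smul_right t)

lemma exp_scalar_smul (c : ℝ) (M : Matrix (Fin N) (Fin N) ℝ) :
    exp (c • (1 : Matrix (Fin N) (Fin N) ℝ) + M)
      = Real.exp c • exp M := by
  have hc : Commute (c • (1 : Matrix (Fin N) (Fin N) ℝ)) M :=
    ((Commute.one_left M).smul_left c)
  rw [Matrix.exp_add_of_commute _ _ hc]
  have h1 : exp (c • (1 : Matrix (Fin N) (Fin N) ℝ)) =
      Real.exp c • (1 : Matrix (Fin N) (Fin N) ℝ) := by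
    have hd : c • (1 : Matrix (Fin N) (Fin N) ℝ)
        = Matrix.diagonal (fun _ : Fin N => c) := by
      ext i j
      by_cases h : i = j <;> simp [Matrix.one_apply, Matrix.diagonal_apply, h]
    rw [hd, Matrix.exp_diagonal]
    have h2 : exp (fun _ : Fin N => c) = fun _ : Fin N => Real.exp c := by
      funext i
      rw [Pi.coe_exp _ i, Real.exp_eq_exp_ℝ]
    rw [h2]
    ext i j
    by_cases h : i = j <;> simp [Matrix.one_apply, Matrix.diagonal_apply, h]
  rw [h1, Matrix.smul_mul, Matrix.one_mul]

end more

section contraction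
variable {N : ℕ} (hne : (Finset.univ : Finset (Fin N)).Nonempty)
variable {P : Matrix (Fin N) (Fin N) ℝ} {r : Fin N} {δ : ℝ}
variable (hnn : ∀ i j, 0 ≤ P i j) (hrow : ∀ i, ∑ j, P i j = 1) (hcol : ∀ i, δ ≤ P i r)

include hnn hrow in
lemma mulVec_le_sup (x : Fin N → ℝ) (i : Fin N) :
    (P.mulVec x) i ≤ Finset.sup' Finset.univ hne x := by
  have h1 : (P.mulVec x) i ≤ ∑ j, P i j * Finset.sup' Finset.univ hne x := by
    simp only [Matrix.mulVec, dotProduct]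
    exact Finset.sum_le_sum fun j _ =>
      mul_le_mul_of_nonneg_left (Finset.le_sup' x (Finset.mem_univ j)) (hnn i j)
  calc (P.mulVec x) i ≤ _ := h1
    _ = Finset.sup' Finset.univ hne x := by rw [← Finset.sum_mul, hrow i, one_mul]

include hnn hrow in
lemma inf_le_mulVec (x : Fin N → ℝ) (i : Fin N) :
    Finset.inf' Finset.univ hne x ≤ (P.mulVec x) i := by
  have h1 : ∑ j, P i j * Finset.inf' Finset.univ hne x ≤ (P.mulVec x) i := by
    simp only [Matrix.mulVec, dotProduct]
    exact Finset.sum_le_sum fun j _ =>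
      mul_le_mul_of_nonneg_left (Finset.inf'_le x (Finset.mem_univ j)) (hnn i j)
  calc Finset.inf' Finset.univ hne x = ∑ j, P i j * Finset.inf' Finset.univ hne x := by
        rw [← Finset.sum_mul, hrow i, one_mul]
    _ ≤ _ := h1

include hnn hrow hcol in
lemma mulVec_key (x : Fin N → ℝ) (i : Fin N) :
    (P.mulVec x) i ≤ δ * x r + (1 - δ) * Finset.sup' Finset.univ hne x ∧
    δ * x r + (1 - δ) * Finset.inf' Finset.univ hne x ≤ (P.mulVec x) i := by
  classical
  have key : (P.mulVec x) i - δ * x r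
      = ∑ j, (P i j - if j = r then δ else 0) * x j := by
    simp only [Matrix.mulVec, dotProduct, sub_mul, Finset.sum_sub_distrib, ite_mul,
      zero_mul, Finset.sum_ite_eq' Finset.univ r, Finset.mem_univ, if_pos]
  have hQnn : ∀ j, 0 ≤ P i j - if j = r then δ else 0 := by
    intro j
    by_cases h : j = r
    · subst h; simpa using sub_nonneg.2 (hcol i)
    · simpa [h] using hnn i j
  have hQsum : ∑ j, (P i j - if j = r then δ else 0) = 1 - δ := by
    rw [Finset.sum_sub_distrib, hrow i]
    simp
  constructor
  · rw [← sub_le_iff_le_add', key]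
    calc ∑ j, (P i j - if j = r then δ else 0) * x j
        ≤ ∑ j, (P i j - if j = r then δ else 0) * Finset.sup' Finset.univ hne x :=
          Finset.sum_le_sum fun j _ =>
            mul_le_mul_of_nonneg_left (Finset.le_sup' x (Finset.mem_univ j)) (hQnn j)
      _ = (1 - δ) * Finset.sup' Finset.univ hne x := by rw [← Finset.sum_mul, hQsum]
  · rw [add_comm, ← le_sub_iff_add_le, key]
    calc (1 - δ) * Finset.inf' Finset.univ hne x
        = ∑ j, (P i j - if j = r then δ else 0) * Finset.inf' Finset.univ hne x := by
          rw [← Finset.sum_mul, hQsum]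
      _ ≤ ∑ j, (P i j - if j = r then δ else 0) * x j :=
          Finset.sum_le_sum fun j _ =>
            mul_le_mul_of_nonneg_left (Finset.inf'_le x (Finset.mem_univ j)) (hQnn j)

include hnn hrow hcol in
lemma osc_contract (x : Fin N → ℝ) :
    Finset.sup' Finset.univ hne (P.mulVec x) - Finset.inf' Finset.univ hne (P.mulVec x)
      ≤ (1 - δ) * (Finset.sup' Finset.univ hne x - Finset.inf' Finset.univ hne x) := by
  have h1 : Finset.sup' Finset.univ hne (P.mulVec x)
      ≤ δ * x r + (1 - δ) * Finset.sup' Finset.univ hne x :=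
    Finset.sup'_le _ _ fun i _ => (mulVec_key hne hnn hrow hcol x i).1
  have h2 : δ * x r + (1 - δ) * Finset.inf' Finset.univ hne x
      ≤ Finset.inf' Finset.univ hne (P.mulVec x) :=
    Finset.le_inf' _ _ fun i _ => (mulVec_key hne hnn hrow hcol x i).2
  nlinarith [h1, h2]

end contraction

section converge
variable {N : ℕ} (hne : (Finset.univ : Finset (Fin N)).Nonempty)
variable {P : Matrix (Fin N) (Fin N) ℝ} {r : Fin N} {δ : ℝ}
variable (hnn : ∀ i j, 0 ≤ P i j) (hrow : ∀ i, ∑ j, P i j = 1) (hcol : ∀ i, δ ≤ P i r)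

include hne hnn hrow hcol in
lemma iterate_tendsto (hδ : 0 < δ) (x : Fin N → ℝ) :
    ∃ c : ℝ, Tendsto (fun k : ℕ => (P ^ k).mulVec x) atTop (nhds (c • (1 : Fin N → ℝ))) := by
  classical
  set xk : ℕ → Fin N → ℝ := fun k => (P ^ k).mulVec x with hxk
  have hrec : ∀ k, xk (k + 1) = P.mulVec (xk k) := by
    intro k
    simp only [hxk, pow_succ', Matrix.mulVec_mulVec]
  set m : ℕ → ℝ := fun k => Finset.inf' Finset.univ hne (xk k) with hm
  set M : ℕ → ℝ := fun k => Finset.sup' Finset.univ hne (xk k) with hM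
  have hδ1 : δ ≤ 1 := by
    obtain ⟨i, _⟩ := hne
    calc δ ≤ P i r := hcol i
      _ ≤ ∑ j, P i j := Finset.single_le_sum (fun j _ => hnn i j) (Finset.mem_univ r)
      _ = 1 := hrow i
  have hmM : ∀ k, m k ≤ M k := fun k =>
    le_trans (Finset.inf'_le _ (Finset.mem_univ r)) (Finset.le_sup' _ (Finset.mem_univ r))
  have hmmono : Monotone m := by
    apply monotone_nat_of_le_succ
    intro k
    rw [hm]
    simp only []
    rw [hrec k]
    exact Finset.le_inf' _ _ fun i _ => inf_le_mulVec hne hnn hrow (xk k) i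
  have hManti : Antitone M := by
    apply antitone_nat_of_succ_le
    intro k
    rw [hM]
    simp only []
    rw [hrec k]
    exact Finset.sup'_le _ _ fun i _ => mulVec_le_sup hne hnn hrow (xk k) i
  have hgap : ∀ k, M k - m k ≤ (1 - δ) ^ k * (M 0 - m 0) := by
    intro k
    induction k with
    | zero => simp
    | succ k ih =>
      have h1 : M (k + 1) - m (k + 1) ≤ (1 - δ) * (M k - m k) := by
        rw [hM, hm]
        simp only []
        rw [hrec k]
        exact osc_contract hne hnn hrow hcol (xk k)
      calc M (k + 1) - m (k + 1) ≤ (1 - δ) * (M k - m k) := h1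
        _ ≤ (1 - δ) * ((1 - δ) ^ k * (M 0 - m 0)) :=
            mul_le_mul_of_nonneg_left ih (by linarith)
        _ = (1 - δ) ^ (k + 1) * (M 0 - m 0) := by ring
  have hbdd : BddAbove (Set.range m) := by
    refine ⟨M 0, ?_⟩
    rintro _ ⟨k, rfl⟩
    exact le_trans (hmM k) (hManti (Nat.zero_le k))
  set c : ℝ := ⨆ k, m k with hc
  have hmc : ∀ k, m k ≤ c := fun k => le_ciSup hbdd k
  have hcM : ∀ k, c ≤ M k := by
    intro k
    apply ciSup_le
    intro j
    rcases le_total j k with h | h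
    · exact le_trans (hmmono h) (hmM k)
    · exact le_trans (hmM j) (hManti h)
  have hgap0 : Tendsto (fun k => M k - m k) atTop (nhds 0) := by
    apply squeeze_zero (fun k => by linarith [hmM k]) hgap
    rw [show (0:ℝ) = 0 * (M 0 - m 0) by ring]
    exact (tendsto_pow_atTop_nhds_zero_of_lt_one (by linarith) (by linarith)).mul_const _
  refine ⟨c, ?_⟩
  rw [tendsto_iff_norm_sub_tendsto_zero]
  apply squeeze_zero (fun k => norm_nonneg _) _ hgap0
  intro k
  have hb : 0 ≤ M k - m k := by linarith [hmM k]
  rw [pi_norm_le_iff_of_nonneg hb]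
  intro i
  have h1 : m k ≤ xk k i := Finset.inf'_le _ (Finset.mem_univ i)
  have h2 : xk k i ≤ M k := Finset.le_sup' _ (Finset.mem_univ i)
  rw [Real.norm_eq_abs, abs_le]
  constructor <;> simp only [Pi.sub_apply, Pi.smul_apply, Pi.one_apply, smul_eq_mul, mul_one] <;>
    linarith [hmc k, hcM k]

end converge
section lap
variable {N : ℕ} {a : Fin N → Fin N → ℝ}

/-- `exp(-tL)` as a function of `t`. -/
noncomputable def EL (a : Fin N → Fin N → ℝ) (t : ℝ) : Matrix (Fin N) (Fin N) ℝ :=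
  exp (t • (-(graphLaplacian a)))

lemma EL_mulVec_one (t : ℝ) : (EL a t).mulVec 1 = 1 := by
  apply exp_mulVec_fixed
  rw [Matrix.smul_mulVec, Matrix.neg_mulVec, lap_mulVec_one]
  simp

lemma EL_row_sum (t : ℝ) (i : Fin N) : ∑ j, EL a t i j = 1 := by
  have := congrFun (EL_mulVec_one (a := a) t) i
  simpa [Matrix.mulVec, dotProduct] using this

lemma EL_vecMul_w {w : Fin N → ℝ} (hw : Matrix.vecMul w (graphLaplacian a) = 0) (t : ℝ) :
    Matrix.vecMul w (EL a t) = w := by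
  apply exp_vecMul_fixed
  have h : Matrix.vecMul w (t • (-(graphLaplacian a)))
      = t • Matrix.vecMul w (-(graphLaplacian a)) := by
    funext j
    simp [Matrix.vecMul, dotProduct, Finset.mul_sum, mul_left_comm]
  rw [h, Matrix.vecMul_neg, hw]
  simp

lemma EL_add (s t : ℝ) : EL a (s + t) = EL a s * EL a t := exp_smul_add s t _

lemma EL_pow (k : ℕ) : EL a (k : ℝ) = (EL a 1) ^ k := by
  rw [EL, Nat.cast_smul_eq_nsmul, Matrix.exp_nsmul, EL, one_smul]

lemma EL_eq (ha : ∀ i j, 0 ≤ a i j) (t : ℝ) :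
    EL a t = Real.exp (-(t * (1 + ∑ p, graphLaplacian a p p))) •
      exp ((t * (1 + ∑ p, graphLaplacian a p p)) • (1 : Matrix (Fin N) (Fin N) ℝ)
        + t • (-(graphLaplacian a))) := by
  set c := t * (1 + ∑ p, graphLaplacian a p p) with hc
  have : t • (-(graphLaplacian a))
      = (-c) • (1 : Matrix (Fin N) (Fin N) ℝ)
        + (c • (1 : Matrix (Fin N) (Fin N) ℝ) + t • (-(graphLaplacian a))) := by
    rw [← add_assoc, ← add_smul]
    simp
  rw [EL]
  conv_lhs => rw [this]
  rw [exp_scalar_smul]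

lemma lap_diag_nonneg (ha : ∀ i j, 0 ≤ a i j) (i : Fin N) : 0 ≤ graphLaplacian a i i := by
  have : graphLaplacian a i i = ∑ k ∈ Finset.univ.erase i, a i k := if_pos rfl
  rw [this]
  exact Finset.sum_nonneg fun k _ => ha i k

lemma B_entry_nonneg (ha : ∀ i j, 0 ≤ a i j) (ht : 0 ≤ t) (i j : Fin N) :
    0 ≤ ((t * (1 + ∑ p, graphLaplacian a p p)) • (1 : Matrix (Fin N) (Fin N) ℝ)
        + t • (-(graphLaplacian a))) i j := by
  have hD : graphLaplacian a i i ≤ ∑ p, graphLaplacian a p p :=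
    Finset.single_le_sum (fun p _ => lap_diag_nonneg ha p) (Finset.mem_univ i)
  by_cases h : i = j
  · subst h
    have : ((t * (1 + ∑ p, graphLaplacian a p p)) • (1 : Matrix (Fin N) (Fin N) ℝ)
        + t • (-(graphLaplacian a))) i i
        = t * (1 + ∑ p, graphLaplacian a p p) - t * graphLaplacian a i i := by
      simp [Matrix.one_apply]; ring
    rw [this]
    nlinarith
  · have hod : graphLaplacian a i j = -(a i j) := if_neg h
    have : ((t * (1 + ∑ p, graphLaplacian a p p)) • (1 : Matrix (Fin N) (Fin N) ℝ)
        + t • (-(graphLaplacian a))) i j = t * a i j := by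
      simp [Matrix.one_apply, h, hod]
    rw [this]
    exact mul_nonneg ht (ha i j)

lemma EL_entry_nonneg (ha : ∀ i j, 0 ≤ a i j) (ht : 0 ≤ t) (i j : Fin N) :
    0 ≤ EL a t i j := by
  rw [EL_eq ha t]
  have h := exp_entry_nonneg (B_entry_nonneg ha ht) i j
  have : (0:ℝ) < Real.exp (-(t * (1 + ∑ p, graphLaplacian a p p))) := Real.exp_pos _
  simpa [Matrix.smul_apply, smul_eq_mul] using mul_nonneg this.le h

end lap

section poscol
variable {N : ℕ} {a : Fin N → Fin N → ℝ} {r : Fin N}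

lemma B_diag_pos (ha : ∀ i j, 0 ≤ a i j) (ht : 0 < t) (i : Fin N) :
    0 < ((t * (1 + ∑ p, graphLaplacian a p p)) • (1 : Matrix (Fin N) (Fin N) ℝ)
        + t • (-(graphLaplacian a))) i i := by
  have hD : graphLaplacian a i i ≤ ∑ p, graphLaplacian a p p :=
    Finset.single_le_sum (fun p _ => lap_diag_nonneg ha p) (Finset.mem_univ i)
  have h : ((t * (1 + ∑ p, graphLaplacian a p p)) • (1 : Matrix (Fin N) (Fin N) ℝ)
      + t • (-(graphLaplacian a))) i i
      = t * (1 + ∑ p, graphLaplacian a p p) - t * graphLaplacian a i i := by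
    simp [Matrix.one_apply]; ring
  rw [h]
  nlinarith

lemma B_edge_pos (ha : ∀ i j, 0 ≤ a i j) (ht : 0 < t) {i j : Fin N} (hij : i ≠ j)
    (hpos : 0 < a i j) :
    0 < ((t * (1 + ∑ p, graphLaplacian a p p)) • (1 : Matrix (Fin N) (Fin N) ℝ)
        + t • (-(graphLaplacian a))) i j := by
  have hod : graphLaplacian a i j = -(a i j) := if_neg hij
  have h : ((t * (1 + ∑ p, graphLaplacian a p p)) • (1 : Matrix (Fin N) (Fin N) ℝ)
      + t • (-(graphLaplacian a))) i j = t * a i j := by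
    simp [Matrix.one_apply, hij, hod]
  rw [h]
  positivity

lemma B_pow_pos (ha : ∀ i j, 0 ≤ a i j) (ht : 0 < t)
    (hroot : ∀ v : Fin N, Relation.ReflTransGen (fun u v => 0 < a v u) r v) (v : Fin N) :
    ∃ k : ℕ, 0 < ((((t * (1 + ∑ p, graphLaplacian a p p)) •
        (1 : Matrix (Fin N) (Fin N) ℝ) + t • (-(graphLaplacian a)))) ^ k) v r := by
  set B := (t * (1 + ∑ p, graphLaplacian a p p)) • (1 : Matrix (Fin N) (Fin N) ℝ)
      + t • (-(graphLaplacian a)) with hB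
  have hBnn : ∀ i j, 0 ≤ B i j := B_entry_nonneg ha ht.le
  have hBpos : ∀ i j : Fin N, (i = j ∨ 0 < a i j) → 0 < B i j := by
    rintro i j (rfl | h)
    · exact B_diag_pos ha ht i
    · by_cases hij : i = j
      · subst hij; exact B_diag_pos ha ht i
      · exact B_edge_pos ha ht hij h
  induction hroot v with
  | refl => exact ⟨0, by simp⟩
  | tail hpath hstep ih =>
    obtain ⟨k, hk⟩ := ih
    rename_i u v'
    refine ⟨k + 1, ?_⟩
    rw [pow_succ', Matrix.mul_apply]
    have hterm : 0 < B v' u * ((B ^ k) u r) := mul_pos (hBpos v' u (Or.inr hstep)) hk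
    have : B v' u * ((B ^ k) u r) ≤ ∑ l, B v' l * (B ^ k) l r :=
      Finset.single_le_sum (f := fun l => B v' l * (B ^ k) l r)
        (fun l _ => mul_nonneg (hBnn v' l) (pow_entry_nonneg hBnn k l r)) (Finset.mem_univ u)
    linarith

lemma EL_pos_col (ha : ∀ i j, 0 ≤ a i j) (ht : 0 < t)
    (hroot : ∀ v : Fin N, Relation.ReflTransGen (fun u v => 0 < a v u) r v) (v : Fin N) :
    0 < EL a t v r := by
  obtain ⟨k, hk⟩ := B_pow_pos ha ht hroot v
  rw [EL_eq ha t]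
  set B := (t * (1 + ∑ p, graphLaplacian a p p)) • (1 : Matrix (Fin N) (Fin N) ℝ)
      + t • (-(graphLaplacian a)) with hB
  have h1 : (k.factorial⁻¹ : ℝ) • (B ^ k) v r ≤ (exp B) v r :=
    exp_entry_le (B_entry_nonneg ha ht.le) v r k
  have h2 : (0:ℝ) < (k.factorial⁻¹ : ℝ) • (B ^ k) v r := by
    have : (0:ℝ) < (k.factorial : ℝ)⁻¹ := by positivity
    simpa [smul_eq_mul] using mul_pos this hk
  have h3 : (0:ℝ) < Real.exp (-(t * (1 + ∑ p, graphLaplacian a p p))) := Real.exp_pos _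
  have : (0:ℝ) < (exp B) v r := lt_of_lt_of_le h2 h1
  simpa [Matrix.smul_apply, smul_eq_mul] using mul_pos h3 this

end poscol

section realtime
variable {N : ℕ} {a : Fin N → Fin N → ℝ} {r : Fin N}

lemma EL_mulVec_norm_le (ha : ∀ i j, 0 ≤ a i j) (ht : 0 ≤ t) (y : Fin N → ℝ) :
    ‖(EL a t).mulVec y‖ ≤ ‖y‖ := by
  rcases isEmpty_or_nonempty (Fin N) with h | h
  · simp [Subsingleton.elim ((EL a t).mulVec y) 0, norm_nonneg]
  rw [pi_norm_le_iff_of_nonneg (norm_nonneg y)]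
  intro i
  have h1 : |((EL a t).mulVec y) i| ≤ ∑ j, EL a t i j * |y j| := by
    rw [Matrix.mulVec, dotProduct]
    refine le_trans (Finset.abs_sum_le_sum_abs _ _) (Finset.sum_le_sum fun j _ => ?_)
    rw [abs_mul, abs_of_nonneg (EL_entry_nonneg ha ht i j)]
  have h2 : ∑ j, EL a t i j * |y j| ≤ ∑ j, EL a t i j * ‖y‖ :=
    Finset.sum_le_sum fun j _ => mul_le_mul_of_nonneg_left
      (by rw [← Real.norm_eq_abs]; exact norm_le_pi_norm y j) (EL_entry_nonneg ha ht i j)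
  rw [Real.norm_eq_abs]
  calc |((EL a t).mulVec y) i| ≤ _ := h1
    _ ≤ _ := h2
    _ = ‖y‖ := by rw [← Finset.sum_mul, EL_row_sum, one_mul]

lemma EL_tendsto (ha : ∀ i j, 0 ≤ a i j)
    (hroot : ∀ v : Fin N, Relation.ReflTransGen (fun u v => 0 < a v u) r v)
    (x : Fin N → ℝ) :
    ∃ c : ℝ, Tendsto (fun t : ℝ => (EL a t).mulVec x) atTop (nhds (c • (1 : Fin N → ℝ))) := by
  have hne : (Finset.univ : Finset (Fin N)).Nonempty := ⟨r, Finset.mem_univ r⟩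
  set P := EL a 1 with hP
  set δ := Finset.inf' Finset.univ hne (fun v => P v r) with hδ
  have hδpos : 0 < δ := by
    rw [hδ, Finset.lt_inf'_iff]
    exact fun v _ => EL_pos_col ha one_pos hroot v
  have hnn : ∀ i j, 0 ≤ P i j := fun i j => EL_entry_nonneg ha zero_le_one i j
  have hrow : ∀ i, ∑ j, P i j = 1 := fun i => EL_row_sum 1 i
  have hcol : ∀ i, δ ≤ P i r := fun i => Finset.inf'_le _ (Finset.mem_univ i)
  obtain ⟨c, hck⟩ := iterate_tendsto hne hnn hrow hcol hδpos x
  refine ⟨c, ?_⟩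
  rw [tendsto_iff_norm_sub_tendsto_zero]
  have hgk : Tendsto (fun k : ℕ => ‖(P ^ k).mulVec x - c • (1 : Fin N → ℝ)‖)
      atTop (nhds 0) := tendsto_iff_norm_sub_tendsto_zero.mp hck
  have hg : Tendsto (fun t : ℝ => ‖(P ^ ⌊t⌋₊).mulVec x - c • (1 : Fin N → ℝ)‖)
      atTop (nhds 0) := hgk.comp tendsto_nat_floor_atTop
  apply squeeze_zero' (Eventually.of_forall fun t => norm_nonneg _) _ hg
  filter_upwards [eventually_ge_atTop (0:ℝ)] with t ht
  -- key decomposition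
  set k := ⌊t⌋₊ with hk
  have hs : 0 ≤ t - k := sub_nonneg.2 (Nat.floor_le ht)
  have hEt : EL a t = EL a (t - k) * EL a (k : ℝ) := by
    rw [← EL_add]
    norm_num
  have hPk : EL a (k : ℝ) = P ^ k := EL_pow k
  have hdec : (EL a t).mulVec x - c • (1 : Fin N → ℝ)
      = (EL a (t - k)).mulVec ((P ^ k).mulVec x - c • (1 : Fin N → ℝ)) := by
    rw [hEt, hPk, ← Matrix.mulVec_mulVec]
    have h1 : (EL a (t - k)).mulVec (c • (1 : Fin N → ℝ))
        = c • (1 : Fin N → ℝ) := by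
      rw [Matrix.mulVec_smul, EL_mulVec_one]
    calc (EL a (t - ↑k)).mulVec ((P ^ k).mulVec x) - c • (1 : Fin N → ℝ)
        = (EL a (t - ↑k)).mulVec ((P ^ k).mulVec x)
          - (EL a (t - ↑k)).mulVec (c • (1 : Fin N → ℝ)) := by rw [h1]
      _ = (EL a (t - ↑k)).mulVec ((P ^ k).mulVec x - c • (1 : Fin N → ℝ)) := by
          rw [← Matrix.mulVec_sub]
  rw [hdec]
  exact EL_mulVec_norm_le ha hs _

end realtime

section wchar
variable {N : ℕ} {a : Fin N → Fin N → ℝ} {r : Fin N} {w : Fin N → ℝ}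

lemma dot_continuous (w : Fin N → ℝ) : Continuous fun y : Fin N → ℝ => w ⬝ᵥ y := by
  unfold dotProduct
  exact continuous_finset_sum _ fun i _ => (continuous_const.mul (continuous_apply i))

lemma EL_tendsto_c (ha : ∀ i j, 0 ≤ a i j)
    (hroot : ∀ v : Fin N, Relation.ReflTransGen (fun u v => 0 < a v u) r v)
    (hw : Matrix.vecMul w (graphLaplacian a) = 0) (x : Fin N → ℝ) :
    ∃ c : ℝ, Tendsto (fun t : ℝ => (EL a t).mulVec x) atTop (nhds (c • (1 : Fin N → ℝ)))
      ∧ w ⬝ᵥ x = c * (w ⬝ᵥ (1 : Fin N → ℝ)) := by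
  obtain ⟨c, hc⟩ := EL_tendsto ha hroot x
  refine ⟨c, hc, ?_⟩
  have h1 : Tendsto (fun t : ℝ => w ⬝ᵥ (EL a t).mulVec x) atTop
      (nhds (w ⬝ᵥ (c • (1 : Fin N → ℝ)))) := (dot_continuous w).continuousAt.tendsto.comp hc
  have h2 : (fun t : ℝ => w ⬝ᵥ (EL a t).mulVec x) = fun _ => w ⬝ᵥ x := by
    funext t
    rw [dotProduct_mulVec, EL_vecMul_w hw]
  rw [h2] at h1
  have h3 : w ⬝ᵥ x = w ⬝ᵥ (c • (1 : Fin N → ℝ)) :=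
    tendsto_nhds_unique tendsto_const_nhds h1
  rw [h3, dotProduct_smul, smul_eq_mul]

lemma w_dot_one_ne (ha : ∀ i j, 0 ≤ a i j)
    (hroot : ∀ v : Fin N, Relation.ReflTransGen (fun u v => 0 < a v u) r v)
    (hw : Matrix.vecMul w (graphLaplacian a) = 0) (hw0 : w ≠ 0) :
    w ⬝ᵥ (1 : Fin N → ℝ) ≠ 0 := by
  obtain ⟨c, _, hcw⟩ := EL_tendsto_c ha hroot hw w
  intro h
  rw [h, mul_zero] at hcw
  exact hw0 ((dotProduct_self_eq_zero).mp hcw)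

lemma EL_tendsto_zero_iff (ha : ∀ i j, 0 ≤ a i j)
    (hroot : ∀ v : Fin N, Relation.ReflTransGen (fun u v => 0 < a v u) r v)
    (hw : Matrix.vecMul w (graphLaplacian a) = 0) (hw0 : w ≠ 0) (x : Fin N → ℝ) :
    Tendsto (fun t : ℝ => (EL a t).mulVec x) atTop (nhds 0) ↔ w ⬝ᵥ x = 0 := by
  obtain ⟨c, hc, hcw⟩ := EL_tendsto_c ha hroot hw x
  constructor
  · intro h
    have h1 : c • (1 : Fin N → ℝ) = 0 := tendsto_nhds_unique hc h
    have h2 : c = 0 := by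
      have := congrFun h1 r
      simpa using this
    rw [hcw, h2, zero_mul]
  · intro h
    have h2 : c = 0 := by
      rcases mul_eq_zero.mp (h ▸ hcw.symm) with h' | h'
      · exact h'
      · exact absurd h' (w_dot_one_ne ha hroot hw hw0)
    rw [h2] at hc
    simpa using hc

lemma left_kernel_eq_span (ha : ∀ i j, 0 ≤ a i j)
    (hroot : ∀ v : Fin N, Relation.ReflTransGen (fun u v => 0 < a v u) r v)
    (hw : Matrix.vecMul w (graphLaplacian a) = 0) (hw0 : w ≠ 0)
    {v : Fin N → ℝ} (hv : Matrix.vecMul v (graphLaplacian a) = 0) :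
    v = ((v ⬝ᵥ (1 : Fin N → ℝ)) / (w ⬝ᵥ (1 : Fin N → ℝ))) • w := by
  have hw1 := w_dot_one_ne ha hroot hw hw0
  have key : ∀ j : Fin N, (w ⬝ᵥ (1 : Fin N → ℝ)) * v j = (v ⬝ᵥ (1 : Fin N → ℝ)) * w j := by
    intro j
    obtain ⟨c, hc, hcw⟩ := EL_tendsto_c ha hroot hw (Pi.single j 1)
    -- v-side
    have h1 : Tendsto (fun t : ℝ => v ⬝ᵥ (EL a t).mulVec (Pi.single j 1)) atTop
        (nhds (v ⬝ᵥ (c • (1 : Fin N → ℝ)))) := (dot_continuous v).continuousAt.tendsto.comp hc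
    have h2 : (fun t : ℝ => v ⬝ᵥ (EL a t).mulVec (Pi.single j 1))
        = fun _ => v ⬝ᵥ Pi.single j 1 := by
      funext t
      rw [dotProduct_mulVec, EL_vecMul_w hv]
    rw [h2] at h1
    have h3 : v ⬝ᵥ Pi.single j 1 = c * (v ⬝ᵥ (1 : Fin N → ℝ)) := by
      rw [tendsto_nhds_unique tendsto_const_nhds h1, dotProduct_smul, smul_eq_mul]
    have h4 : w ⬝ᵥ Pi.single j 1 = c * (w ⬝ᵥ (1 : Fin N → ℝ)) := hcw
    have hsingle : ∀ u : Fin N → ℝ, u ⬝ᵥ Pi.single j 1 = u j := by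
      intro u
      rw [dotProduct]
      rw [Finset.sum_eq_single j]
      · simp
      · intro b _ hb; simp [Pi.single_eq_of_ne hb]
      · intro hb; exact absurd (Finset.mem_univ j) hb
    have h5 : v ⬝ᵥ Pi.single j 1 = v j := hsingle v
    have h6 : w ⬝ᵥ Pi.single j 1 = w j := hsingle w
    rw [h5] at h3
    rw [h6] at h4
    rw [h3, h4]
    ring
  funext j
  have := key j
  simp only [Pi.smul_apply, smul_eq_mul]
  field_simp
  linarith [this]

end wchar

section colspace
variable {N : ℕ} {a : Fin N → Fin N → ℝ} {r : Fin N} {w : Fin N → ℝ}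

/-- dot product with `w` as a linear map. -/
def dotLM (w : Fin N → ℝ) : (Fin N → ℝ) →ₗ[ℝ] ℝ where
  toFun y := w ⬝ᵥ y
  map_add' y z := dotProduct_add w y z
  map_smul' c y := by simp [dotProduct_smul]

lemma col_space_eq (ha : ∀ i j, 0 ≤ a i j)
    (hroot : ∀ v : Fin N, Relation.ReflTransGen (fun u v => 0 < a v u) r v)
    (hw : Matrix.vecMul w (graphLaplacian a) = 0) (hw0 : w ≠ 0) :
    LinearMap.range (graphLaplacian a).mulVecLin = LinearMap.ker (dotLM w) := by
  classical
  set L := graphLaplacian a with hLdef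
  -- inclusion
  have hle : LinearMap.range L.mulVecLin ≤ LinearMap.ker (dotLM w) := by
    rintro x ⟨y, rfl⟩
    show w ⬝ᵥ L.mulVec y = 0
    rw [dotProduct_mulVec, hw]
    simp
  -- kernel of transpose = span of w
  have hkerT : LinearMap.ker (Lᵀ.mulVecLin) = Submodule.span ℝ {w} := by
    apply le_antisymm
    · intro v hv
      have hv' : Matrix.vecMul v L = 0 := by
        have : Lᵀ.mulVec v = 0 := hv
        rwa [Matrix.mulVec_transpose] at this
      rw [left_kernel_eq_span ha hroot hw hw0 hv']
      exact Submodule.smul_mem _ _ (Submodule.mem_span_singleton_self w)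
    · rw [Submodule.span_singleton_le_iff_mem]
      show Lᵀ.mulVec w = 0
      rw [Matrix.mulVec_transpose, hw]
  have hkerT1 : Module.finrank ℝ (LinearMap.ker (Lᵀ.mulVecLin)) = 1 := by
    rw [hkerT]
    exact finrank_span_singleton hw0
  -- rank computations
  have hrankT : Lᵀ.rank + 1 = N := by
    have := LinearMap.finrank_range_add_finrank_ker (Lᵀ.mulVecLin)
    rw [hkerT1] at this
    simpa [Matrix.rank, Module.finrank_fintype_fun_eq_card] using this
  have hrankL : L.rank + 1 = N := by rw [← Matrix.rank_transpose]; exact hrankT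
  -- kernel of dotLM w has dimension N - 1
  have hsurj : Function.Surjective (dotLM w) := by
    intro x
    refine ⟨(x / (w ⬝ᵥ w)) • w, ?_⟩
    show w ⬝ᵥ ((x / (w ⬝ᵥ w)) • w) = x
    rw [dotProduct_smul, smul_eq_mul]
    have hww : w ⬝ᵥ w ≠ 0 := fun h => hw0 (dotProduct_self_eq_zero.mp h)
    field_simp
  have hkerw : Module.finrank ℝ (LinearMap.ker (dotLM w)) + 1 = N := by
    have h1 := LinearMap.finrank_range_add_finrank_ker (dotLM w)
    rw [LinearMap.range_eq_top.mpr hsurj] at h1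
    simpa [Module.finrank_fintype_fun_eq_card, add_comm] using h1
  apply Submodule.eq_of_le_of_finrank_eq hle
  have h2 : Module.finrank ℝ (LinearMap.range L.mulVecLin) = L.rank := rfl
  omega

end colspace

section kron
open scoped Kronecker
variable {N n : ℕ}

/-- `A ↦ A ⊗ₖ 1` as an `ℝ`-algebra homomorphism. -/
def kron1 (N n : ℕ) : Matrix (Fin N) (Fin N) ℝ →ₐ[ℝ] Matrix (Fin N × Fin n) (Fin N × Fin n) ℝ where
  toFun A := A ⊗ₖ (1 : Matrix (Fin n) (Fin n) ℝ)
  map_one' := Matrix.one_kronecker_one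
  map_mul' A B := by
    rw [← Matrix.mul_kronecker_mul, Matrix.one_mul]
  map_zero' := Matrix.zero_kronecker _
  map_add' A B := Matrix.add_kronecker A B _
  commutes' c := by
    show (algebraMap ℝ (Matrix (Fin N) (Fin N) ℝ) c) ⊗ₖ (1 : Matrix (Fin n) (Fin n) ℝ) = _
    rw [Algebra.algebraMap_eq_smul_one, Algebra.algebraMap_eq_smul_one,
      Matrix.smul_kronecker, Matrix.one_kronecker_one]

lemma kron1_cont : Continuous (kron1 (N := N) (n := n)) :=
  LinearMap.continuous_of_finiteDimensional (kron1 N n).toLinearMap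

lemma exp_kron (M : Matrix (Fin N) (Fin N) ℝ) :
    exp (M ⊗ₖ (1 : Matrix (Fin n) (Fin n) ℝ)) = (exp M) ⊗ₖ (1 : Matrix (Fin n) (Fin n) ℝ) := by
  letI : NormedRing (Matrix (Fin N) (Fin N) ℝ) := Matrix.linftyOpNormedRing
  letI : NormedAlgebra ℝ (Matrix (Fin N) (Fin N) ℝ) := Matrix.linftyOpNormedAlgebra
  letI : NormedRing (Matrix (Fin N × Fin n) (Fin N × Fin n) ℝ) := Matrix.linftyOpNormedRing
  letI : NormedAlgebra ℝ (Matrix (Fin N × Fin n) (Fin N × Fin n) ℝ) :=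
    Matrix.linftyOpNormedAlgebra
  letI : NormedAlgebra ℚ (Matrix (Fin N) (Fin N) ℝ) :=
    { (inferInstance : Algebra ℚ (Matrix (Fin N) (Fin N) ℝ)) with
      norm_smul_le := fun q x => by
        rw [← smul_one_smul ℝ q x, Rat.smul_one_eq_cast, norm_smul, Rat.norm_cast_real] }
  letI : NormedAlgebra ℚ (Matrix (Fin N × Fin n) (Fin N × Fin n) ℝ) :=
    { (inferInstance : Algebra ℚ (Matrix (Fin N × Fin n) (Fin N × Fin n) ℝ)) with
      norm_smul_le := fun q x => by
        rw [← smul_one_smul ℝ q x, Rat.smul_one_eq_cast, norm_smul, Rat.norm_cast_real] }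
  exact (map_exp (kron1 N n) kron1_cont M).symm

lemma kron_mulVec (L : Matrix (Fin N) (Fin N) ℝ) (y : Fin N × Fin n → ℝ) (i : Fin N) (k : Fin n) :
    ((L ⊗ₖ (1 : Matrix (Fin n) (Fin n) ℝ)).mulVec y) (i, k)
      = (L.mulVec fun j => y (j, k)) i := by
  classical
  rw [Matrix.mulVec, dotProduct, Fintype.sum_prod_type, Matrix.mulVec, dotProduct]
  apply Finset.sum_congr rfl
  intro j _
  rw [Finset.sum_eq_single k]
  · simp [Matrix.kroneckerMap_apply, Matrix.one_apply]
  · intro l _ hl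
    simp [Matrix.kroneckerMap_apply, Matrix.one_apply, Ne.symm hl]
  · intro h; exact absurd (Finset.mem_univ k) h

end kron


/-- for a graph with a rooted-out branch and left eigenvector `w` of the zero
eigenvalue of `L`, one has `(wᵀ ⊗ Iₙ) q₀ = 0` iff `q₀` is in the column space of `L ⊗ Iₙ`;
equivalently `exp(−t(L ⊗ Iₙ)) q₀ → 0` iff `q₀` is in the column space of `L ⊗ Iₙ`. -/
theorem left_eigenvector_kernel_iff_column_space
    (N n : ℕ) (a : Fin N → Fin N → ℝ) (ha : ∀ i j, 0 ≤ a i j)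
    (L : Matrix (Fin N) (Fin N) ℝ) (hL : L = graphLaplacian a)
    (hroot : hasRootedOutBranch a)
    (w : Fin N → ℝ) (hw0 : w ≠ 0) (hwL : Matrix.vecMul w L = 0)
    (q0 : Fin N × Fin n → ℝ) :
    (((fun k : Fin n => ∑ i : Fin N, w i * q0 (i, k)) = 0) ↔
      ∃ y : Fin N × Fin n → ℝ,
        (L ⊗ₖ (1 : Matrix (Fin n) (Fin n) ℝ)).mulVec y = q0) ∧
    ((Filter.Tendsto
        (fun t : ℝ =>
          (NormedSpace.exp ((-t) • (L ⊗ₖ (1 : Matrix (Fin n) (Fin n) ℝ)))).mulVec q0)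
        Filter.atTop (nhds 0)) ↔
      ∃ y : Fin N × Fin n → ℝ,
        (L ⊗ₖ (1 : Matrix (Fin n) (Fin n) ℝ)).mulVec y = q0) := by
  subst hL
  obtain ⟨r, hroot'⟩ := hroot
  set L := graphLaplacian a with hLdef
  have hcolspace := col_space_eq ha hroot' hwL hw0
  have hfirst : ((fun k : Fin n => ∑ i : Fin N, w i * q0 (i, k)) = 0) ↔
      ∃ y : Fin N × Fin n → ℝ,
        (L ⊗ₖ (1 : Matrix (Fin n) (Fin n) ℝ)).mulVec y = q0 := by
    constructor
    · intro h
      have hk : ∀ k : Fin n, ∃ yk : Fin N → ℝ, L.mulVec yk = fun i => q0 (i, k) := by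
        intro k
        have hmem : (fun i => q0 (i, k)) ∈ LinearMap.ker (dotLM w) := by
          show w ⬝ᵥ (fun i => q0 (i, k)) = 0
          have := congrFun h k
          simpa [dotProduct] using this
        rw [← hcolspace] at hmem
        obtain ⟨y, hy⟩ := hmem
        exact ⟨y, hy⟩
      choose yk hyk using hk
      refine ⟨fun p => yk p.2 p.1, ?_⟩
      funext p
      obtain ⟨i, k⟩ := p
      rw [kron_mulVec]
      exact congrFun (hyk k) i
    · rintro ⟨y, rfl⟩
      funext k
      have h2 : (fun i => ((L ⊗ₖ (1 : Matrix (Fin n) (Fin n) ℝ)).mulVec y) (i, k))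
          = L.mulVec (fun j => y (j, k)) := funext fun i => kron_mulVec L y i k
      have h3 : w ⬝ᵥ (fun i => ((L ⊗ₖ (1 : Matrix (Fin n) (Fin n) ℝ)).mulVec y) (i, k)) = 0 := by
        rw [h2, dotProduct_mulVec, hwL]
        simp
      simpa [dotProduct] using h3
  refine ⟨hfirst, ?_⟩
  rw [← hfirst]
  have hexp : ∀ t : ℝ, NormedSpace.exp ((-t) • (L ⊗ₖ (1 : Matrix (Fin n) (Fin n) ℝ)))
      = (EL a t) ⊗ₖ (1 : Matrix (Fin n) (Fin n) ℝ) := by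
    intro t
    rw [← Matrix.smul_kronecker, exp_kron, EL, neg_smul, ← smul_neg]
  have hcomp : ∀ (t : ℝ) (i : Fin N) (k : Fin n),
      ((NormedSpace.exp ((-t) • (L ⊗ₖ (1 : Matrix (Fin n) (Fin n) ℝ)))).mulVec q0) (i, k)
        = ((EL a t).mulVec (fun j => q0 (j, k))) i := by
    intro t i k
    rw [hexp t, kron_mulVec]
  constructor
  · intro h
    funext k
    have hk : Tendsto (fun t : ℝ => (EL a t).mulVec (fun j => q0 (j, k))) atTop (nhds 0) := by
      rw [tendsto_pi_nhds]
      intro i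
      have := (tendsto_pi_nhds.mp h) (i, k)
      simp only [Pi.zero_apply] at this ⊢
      exact this.congr fun t => hcomp t i k
    have := (EL_tendsto_zero_iff ha hroot' hwL hw0 _).mp hk
    simpa [dotProduct] using this
  · intro h
    rw [tendsto_pi_nhds]
    rintro ⟨i, k⟩
    have hw' : w ⬝ᵥ (fun j => q0 (j, k)) = 0 := by
      have := congrFun h k
      simpa [dotProduct] using this
    have hk := (EL_tendsto_zero_iff ha hroot' hwL hw0 _).mpr hw'
    have := (tendsto_pi_nhds.mp hk) i
    simp only [Pi.zero_apply] at this ⊢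
    exact this.congr fun t => (hcomp t i k).symm
end

section
/- Let C_1,…,C_N be 3×3 real special orthogonal matrices, and for each agent i and each k ∈ {1,2} let q_{i,k} : [0,∞) → ℝ³ be functions such that for each k there exists a limit q_k^∞ ∈ ℝ³ with q_{i,k}(t) → q_k^∞ as t → ∞ for every i, where q_1^∞ and q_2^∞ are linearly independent. Set z_{i,k}(t) = C_i q_{i,k}(t). For each i and each t at which z_{i,1}(t), z_{i,2}(t) are linearly independent, define b_{i,1}(t), b_{i,2}(t) as the normalized Gram–Schmidt orthonormalization of z_{i,1}(t), z_{i,2}(t), define b_{i,3}(t) = b_{i,1}(t) × b_{i,2}(t), and let B_i(t) be the 3×3 matrix with columns b_{i,1}(t), b_{i,2}(t), b_{i,3}(t). Then B_i(t) is special orthogonal wherever it is defined, and there exists a single matrix X ∈ SO(3) (independent of i) such that B_i(t) → C_i X as t → ∞ for every i ∈ {1,…,N}; consequently B_i(t) − C_i C_j^T B_j(t) → 0 as t → ∞ for all i, j. -/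
open Matrix Filter

/-- The Euclidean norm on `ℝ^n`. -/
noncomputable def euclNorm {n : Type*} [Fintype n] (v : n → ℝ) : ℝ :=
  Real.sqrt (∑ i, v i ^ 2)

/-- Normalized Gram–Schmidt orthonormalization of the sequence `v` in `ℝ^n`:
`gramSchmidtN v k = v'ₖ / ‖v'ₖ‖` where `v'ₖ = vₖ − ∑_{l<k} ⟨vₖ, bₗ⟩ bₗ`. -/
noncomputable def gramSchmidtN {n : ℕ} (v : ℕ → Fin n → ℝ) : ℕ → Fin n → ℝ
  | k =>
    let u : Fin n → ℝ :=
      v k - ∑ l ∈ (Finset.range k).attach,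
        ((v k) ⬝ᵥ gramSchmidtN v l.1) • gramSchmidtN v l.1
    (euclNorm u)⁻¹ • u
  decreasing_by all_goals exact Finset.mem_range.mp l.2

/-- The `3×3` matrix whose columns are `b₁, b₂, b₃`. -/
def colMatrix (b1 b2 b3 : Fin 3 → ℝ) : Matrix (Fin 3) (Fin 3) ℝ :=
  Matrix.of fun r c => ![b1, b2, b3] c r

/-! ### Auxiliary definitions -/

noncomputable def nb1 (v : Fin 3 → ℝ) : Fin 3 → ℝ := (euclNorm v)⁻¹ • v

noncomputable def uvec (v1 v2 : Fin 3 → ℝ) : Fin 3 → ℝ :=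
  v2 - (v2 ⬝ᵥ nb1 v1) • nb1 v1

noncomputable def Gmat (v1 v2 : Fin 3 → ℝ) : Matrix (Fin 3) (Fin 3) ℝ :=
  colMatrix (nb1 v1) (nb1 (uvec v1 v2)) (nb1 v1 ⨯₃ nb1 (uvec v1 v2))

/-! ### Basic lemmas about `euclNorm` -/

lemma enorm_mul_self' {n : Type*} [Fintype n] (v : n → ℝ) : euclNorm v * euclNorm v = v ⬝ᵥ v := by
  rw [euclNorm, Real.mul_self_sqrt (by positivity)]
  simp [dotProduct, pow_two]

lemma enorm_eq_zero_iff' {n : Type*} [Fintype n] (v : n → ℝ) : euclNorm v = 0 ↔ v = 0 := by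
  constructor
  · intro h
    have h0 : v ⬝ᵥ v = 0 := by rw [← enorm_mul_self', h, mul_zero]
    funext i
    have hn : ∀ j ∈ Finset.univ, 0 ≤ v j * v j := fun j _ => mul_self_nonneg _
    have := (Finset.sum_eq_zero_iff_of_nonneg hn).1 h0 i (Finset.mem_univ i)
    simpa using mul_self_eq_zero.1 this
  · rintro rfl; simp [euclNorm]

lemma enorm_continuous {n : Type*} [Fintype n] : Continuous (euclNorm (n := n)) := by
  unfold euclNorm
  exact Real.continuous_sqrt.comp (by continuity)

/-! ### Frame lemma -/

lemma frame_lemma (b1 b2 : Fin 3 → ℝ) (h11 : b1 ⬝ᵥ b1 = 1) (h22 : b2 ⬝ᵥ b2 = 1)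
    (h12 : b1 ⬝ᵥ b2 = 0) :
    (colMatrix b1 b2 (b1 ⨯₃ b2))ᵀ * (colMatrix b1 b2 (b1 ⨯₃ b2)) = 1 ∧
      (colMatrix b1 b2 (b1 ⨯₃ b2)).det = 1 := by
  simp only [dotProduct, Fin.sum_univ_three] at h11 h22 h12
  constructor
  · ext i j
    fin_cases i <;> fin_cases j <;>
      simp [colMatrix, Matrix.mul_apply, Fin.sum_univ_three, crossProduct, Matrix.one_apply]
    · linear_combination h11
    · linear_combination h12
    · ring
    · linear_combination h12
    · linear_combination h22
    · ring
    · ring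
    · ring
    · linear_combination (b1 0*b1 0 + b1 1*b1 1 + b1 2*b1 2) * h22 + h11
        - (b1 0 * b2 0 + b1 1 * b2 1 + b1 2 * b2 2) * h12
  · rw [Matrix.det_fin_three]
    simp [colMatrix, crossProduct]
    linear_combination (b1 0*b1 0 + b1 1*b1 1 + b1 2*b1 2) * h22 + h11
        - (b1 0 * b2 0 + b1 1 * b2 1 + b1 2 * b2 2) * h12

/-! ### Orthonormality of the Gram–Schmidt columns -/

lemma nb1_unit (v : Fin 3 → ℝ) (hv : v ≠ 0) : nb1 v ⬝ᵥ nb1 v = 1 := by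
  have he : euclNorm v ≠ 0 := fun h => hv ((enorm_eq_zero_iff' v).1 h)
  unfold nb1
  rw [smul_dotProduct, dotProduct_smul, ← enorm_mul_self']
  simp only [smul_eq_mul]
  field_simp

lemma nb1_dot_uvec (v1 v2 : Fin 3 → ℝ) (hv : v1 ≠ 0) : nb1 v1 ⬝ᵥ uvec v1 v2 = 0 := by
  unfold uvec
  rw [dotProduct_sub, dotProduct_smul, nb1_unit v1 hv, smul_eq_mul, mul_one,
    dotProduct_comm, sub_self]

lemma nb1_dot_nb1_uvec (v1 v2 : Fin 3 → ℝ) (hv : v1 ≠ 0) :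
    nb1 v1 ⬝ᵥ nb1 (uvec v1 v2) = 0 := by
  rw [show nb1 (uvec v1 v2) = (euclNorm (uvec v1 v2))⁻¹ • uvec v1 v2 from rfl,
    dotProduct_smul, nb1_dot_uvec v1 v2 hv, smul_zero]

lemma indep_aux (v : Fin 2 → Fin 3 → ℝ) (h : LinearIndependent ℝ v) :
    v 0 ≠ 0 ∧ ∀ c : ℝ, v 1 - c • v 0 ≠ 0 := by
  have H := Fintype.linearIndependent_iff.1 h
  constructor
  · intro h0
    have := H ![1, 0] (by simp [Fin.sum_univ_two, h0]) 0
    simpa using this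
  · intro c hc
    have hsum : ∑ i, (![-c, 1] : Fin 2 → ℝ) i • v i = 0 := by
      rw [Fin.sum_univ_two]
      simp only [Matrix.cons_val_zero, Matrix.cons_val_one, Matrix.head_cons, one_smul, neg_smul]
      rw [add_comm, ← sub_eq_add_neg]
      exact hc
    have := H ![-c, 1] hsum 1
    simpa using this

lemma uvec_ne (v1 v2 : Fin 3 → ℝ) (h : ∀ c : ℝ, v2 - c • v1 ≠ 0) : uvec v1 v2 ≠ 0 := by
  unfold uvec nb1
  rw [smul_smul]
  exact h _

lemma Gmat_so (v1 v2 : Fin 3 → ℝ) (hv1 : v1 ≠ 0) (hu : uvec v1 v2 ≠ 0) :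
    (Gmat v1 v2)ᵀ * Gmat v1 v2 = 1 ∧ (Gmat v1 v2).det = 1 :=
  frame_lemma _ _ (nb1_unit _ hv1) (nb1_unit _ hu) (nb1_dot_nb1_uvec _ _ hv1)

/-! ### Gram–Schmidt unfolding -/

lemma gs_zero (w : ℕ → Fin 3 → ℝ) : gramSchmidtN w 0 = nb1 (w 0) := by
  rw [gramSchmidtN]; simp [nb1]

lemma gs_one (w : ℕ → Fin 3 → ℝ) : gramSchmidtN w 1 = nb1 (uvec (w 0) (w 1)) := by
  conv_lhs => rw [gramSchmidtN]
  rw [Finset.sum_attach (Finset.range 1)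
    (fun l => ((w 1) ⬝ᵥ gramSchmidtN w l) • gramSchmidtN w l)]
  simp only [Finset.range_one, Finset.sum_singleton, gs_zero]
  rfl

/-! ### Equivariance under special orthogonal matrices -/

lemma dot_mulVec_same (A : Matrix (Fin 3) (Fin 3) ℝ) (hA : Aᵀ * A = 1) (v w : Fin 3 → ℝ) :
    (A *ᵥ v) ⬝ᵥ (A *ᵥ w) = v ⬝ᵥ w := by
  rw [dotProduct_mulVec, ← Matrix.mulVec_transpose, Matrix.mulVec_mulVec, hA,
    Matrix.one_mulVec]

lemma enorm_mulVec (A : Matrix (Fin 3) (Fin 3) ℝ) (hA : Aᵀ * A = 1) (v : Fin 3 → ℝ) :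
    euclNorm (A *ᵥ v) = euclNorm v := by
  have h1 : euclNorm (A *ᵥ v) * euclNorm (A *ᵥ v) = euclNorm v * euclNorm v := by
    rw [enorm_mul_self', enorm_mul_self', dot_mulVec_same A hA]
  have h2 : 0 ≤ euclNorm (A *ᵥ v) := Real.sqrt_nonneg _
  have h3 : 0 ≤ euclNorm v := Real.sqrt_nonneg _
  nlinarith

lemma nb1_equivariant (A : Matrix (Fin 3) (Fin 3) ℝ) (hA : Aᵀ * A = 1) (v : Fin 3 → ℝ) :
    nb1 (A *ᵥ v) = A *ᵥ nb1 v := by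
  unfold nb1
  rw [enorm_mulVec A hA, Matrix.mulVec_smul]

lemma uvec_equivariant (A : Matrix (Fin 3) (Fin 3) ℝ) (hA : Aᵀ * A = 1) (v1 v2 : Fin 3 → ℝ) :
    uvec (A *ᵥ v1) (A *ᵥ v2) = A *ᵥ uvec v1 v2 := by
  unfold uvec
  rw [nb1_equivariant A hA, dot_mulVec_same A hA, Matrix.mulVec_sub, Matrix.mulVec_smul]

lemma cross_equivariant (A : Matrix (Fin 3) (Fin 3) ℝ) (hA : Aᵀ * A = 1) (hd : A.det = 1)
    (a b : Fin 3 → ℝ) : (A *ᵥ a) ⨯₃ (A *ᵥ b) = A *ᵥ (a ⨯₃ b) := by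
  have hinv : A⁻¹ = Aᵀ := Matrix.inv_eq_left_inv hA
  have hadj : A.adjugate = Aᵀ := by
    rw [← hinv]; symm
    apply Matrix.inv_eq_right_inv
    rw [Matrix.mul_adjugate, hd, one_smul]
  rw [Matrix.adjugate_fin_three] at hadj
  have h := fun r s => congrFun (congrFun hadj r) s
  funext i
  fin_cases i <;>
    simp [crossProduct, Matrix.mulVec, dotProduct, Fin.sum_univ_three]
  · have h0 := h 0 0; have h1 := h 1 0; have h2 := h 2 0
    simp [Matrix.transpose_apply] at h0 h1 h2
    linear_combination (a 1 * b 2 - a 2 * b 1) * h0 + (a 2 * b 0 - a 0 * b 2) * h1 +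
      (a 0 * b 1 - a 1 * b 0) * h2
  · have h0 := h 0 1; have h1 := h 1 1; have h2 := h 2 1
    simp [Matrix.transpose_apply] at h0 h1 h2
    linear_combination (a 1 * b 2 - a 2 * b 1) * h0 + (a 2 * b 0 - a 0 * b 2) * h1 +
      (a 0 * b 1 - a 1 * b 0) * h2
  · have h0 := h 0 2; have h1 := h 1 2; have h2 := h 2 2
    simp [Matrix.transpose_apply] at h0 h1 h2
    linear_combination (a 1 * b 2 - a 2 * b 1) * h0 + (a 2 * b 0 - a 0 * b 2) * h1 +
      (a 0 * b 1 - a 1 * b 0) * h2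

lemma colMatrix_mulVec (A : Matrix (Fin 3) (Fin 3) ℝ) (x y w : Fin 3 → ℝ) :
    colMatrix (A *ᵥ x) (A *ᵥ y) (A *ᵥ w) = A * colMatrix x y w := by
  ext r c
  fin_cases c <;>
    simp [colMatrix, Matrix.mul_apply, Matrix.mulVec, dotProduct, Fin.sum_univ_three]

lemma Gmat_equivariant (A : Matrix (Fin 3) (Fin 3) ℝ) (hA : Aᵀ * A = 1) (hd : A.det = 1)
    (v1 v2 : Fin 3 → ℝ) : Gmat (A *ᵥ v1) (A *ᵥ v2) = A * Gmat v1 v2 := by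
  unfold Gmat
  rw [nb1_equivariant A hA, uvec_equivariant A hA, nb1_equivariant A hA,
    cross_equivariant A hA hd, colMatrix_mulVec]

/-! ### Continuity -/

lemma dot_tendsto {α : Type*} {l : Filter α} {a b : α → Fin 3 → ℝ} {a' b' : Fin 3 → ℝ}
    (ha : Tendsto a l (nhds a')) (hb : Tendsto b l (nhds b')) :
    Tendsto (fun t => a t ⬝ᵥ b t) l (nhds (a' ⬝ᵥ b')) := by
  simp only [dotProduct]
  exact tendsto_finset_sum _ fun i _ =>
    ((tendsto_pi_nhds.1 ha i).mul (tendsto_pi_nhds.1 hb i))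

lemma nb1_tendsto {α : Type*} {l : Filter α} {a : α → Fin 3 → ℝ} {a' : Fin 3 → ℝ}
    (ha : Tendsto a l (nhds a')) (h0 : a' ≠ 0) :
    Tendsto (fun t => nb1 (a t)) l (nhds (nb1 a')) := by
  have he : Tendsto (fun t => euclNorm (a t)) l (nhds (euclNorm a')) :=
    (enorm_continuous.tendsto _).comp ha
  have hne : euclNorm a' ≠ 0 := fun h => h0 ((enorm_eq_zero_iff' a').1 h)
  exact (he.inv₀ hne).smul ha

lemma cross_tendsto {α : Type*} {l : Filter α} {a b : α → Fin 3 → ℝ} {a' b' : Fin 3 → ℝ}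
    (ha : Tendsto a l (nhds a')) (hb : Tendsto b l (nhds b')) :
    Tendsto (fun t => a t ⨯₃ b t) l (nhds (a' ⨯₃ b')) := by
  rw [tendsto_pi_nhds]
  have hc := fun i => tendsto_pi_nhds.1 ha i
  have hd := fun i => tendsto_pi_nhds.1 hb i
  intro i
  fin_cases i <;> simp [crossProduct] <;>
    exact ((hc _).mul (hd _)).sub ((hc _).mul (hd _))

lemma Gmat_tendsto {α : Type*} {l : Filter α} {f1 f2 : α → Fin 3 → ℝ} {v1 v2 : Fin 3 → ℝ}
    (h1 : Tendsto f1 l (nhds v1)) (h2 : Tendsto f2 l (nhds v2))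
    (hv1 : v1 ≠ 0) (hu : uvec v1 v2 ≠ 0) :
    Tendsto (fun t => Gmat (f1 t) (f2 t)) l (nhds (Gmat v1 v2)) := by
  have hb1 : Tendsto (fun t => nb1 (f1 t)) l (nhds (nb1 v1)) := nb1_tendsto h1 hv1
  have hu' : Tendsto (fun t => uvec (f1 t) (f2 t)) l (nhds (uvec v1 v2)) := by
    unfold uvec
    exact h2.sub ((dot_tendsto h2 hb1).smul hb1)
  have hb2 : Tendsto (fun t => nb1 (uvec (f1 t) (f2 t))) l (nhds (nb1 (uvec v1 v2))) :=
    nb1_tendsto hu' hu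
  have hb3 := cross_tendsto hb1 hb2
  refine tendsto_pi_nhds.2 ?_
  intro r
  rw [tendsto_pi_nhds]
  intro c
  fin_cases c <;> simp only [Gmat, colMatrix, Matrix.of_apply, Matrix.cons_val',
      Matrix.cons_val_zero, Matrix.cons_val_one, Matrix.head_cons, Matrix.empty_val',
      Matrix.cons_val_fin_one, Fin.isValue]
  · exact tendsto_pi_nhds.1 hb1 r
  · exact tendsto_pi_nhds.1 hb2 r
  · exact tendsto_pi_nhds.1 hb3 r

theorem orientation_estimation_convergence
    (N : ℕ)
    (C : Fin N → Matrix (Fin 3) (Fin 3) ℝ)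
    (hC : ∀ i, (C i)ᵀ * C i = 1) (hdet : ∀ i, (C i).det = 1)
    (q : Fin N → Fin 2 → ℝ → Fin 3 → ℝ)
    (qinf : Fin 2 → Fin 3 → ℝ)
    (hlim : ∀ i k, Tendsto (fun t => q i k t) atTop (nhds (qinf k)))
    (hindep : LinearIndependent ℝ qinf)
    (z : Fin N → Fin 2 → ℝ → Fin 3 → ℝ)
    (hz : ∀ i k t, z i k t = (C i).mulVec (q i k t))
    (zseq : Fin N → ℝ → ℕ → Fin 3 → ℝ)
    (hzseq : ∀ i t l, zseq i t l = if h : l < 2 then z i ⟨l, h⟩ t else 0)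
    (B : Fin N → ℝ → Matrix (Fin 3) (Fin 3) ℝ)
    (hB : ∀ i t, B i t =
      colMatrix (gramSchmidtN (zseq i t) 0) (gramSchmidtN (zseq i t) 1)
        ((gramSchmidtN (zseq i t) 0) ⨯₃ (gramSchmidtN (zseq i t) 1))) :
    (∀ i t, LinearIndependent ℝ (fun k : Fin 2 => z i k t) →
        (B i t)ᵀ * B i t = 1 ∧ (B i t).det = 1) ∧
    (∃ X : Matrix (Fin 3) (Fin 3) ℝ, Xᵀ * X = 1 ∧ X.det = 1 ∧
        ∀ i, Tendsto (fun t => B i t) atTop (nhds (C i * X))) ∧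
    (∀ i j, Tendsto (fun t => B i t - C i * (C j)ᵀ * B j t) atTop (nhds 0)) := by
  -- B i t = Gmat (z i 0 t) (z i 1 t)
  have hz0 : ∀ i t, zseq i t 0 = z i 0 t := by
    intro i t; rw [hzseq]; norm_num
  have hz1 : ∀ i t, zseq i t 1 = z i 1 t := by
    intro i t; rw [hzseq]; norm_num
  have hBG : ∀ i t, B i t = Gmat (z i 0 t) (z i 1 t) := by
    intro i t
    rw [hB, Gmat, gs_zero, gs_one, hz0, hz1]
  -- the limit frame
  have hqinf := indep_aux qinf hindep
  have hq0 : qinf 0 ≠ 0 := hqinf.1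
  have hqu : uvec (qinf 0) (qinf 1) ≠ 0 := uvec_ne _ _ hqinf.2
  set X := Gmat (qinf 0) (qinf 1) with hX
  have hXso := Gmat_so _ _ hq0 hqu
  -- convergence of B i
  have hBi : ∀ i, Tendsto (fun t => B i t) atTop (nhds (C i * X)) := by
    intro i
    have hG : Tendsto (fun t => Gmat (q i 0 t) (q i 1 t)) atTop (nhds X) :=
      Gmat_tendsto (hlim i 0) (hlim i 1) hq0 hqu
    have heq : (fun t => B i t) = fun t => C i * Gmat (q i 0 t) (q i 1 t) := by
      funext t
      rw [hBG, hz i 0 t, hz i 1 t, Gmat_equivariant (C i) (hC i) (hdet i)]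
    rw [heq]
    have hcont : Continuous fun M : Matrix (Fin 3) (Fin 3) ℝ => C i * M :=
      continuous_const.matrix_mul continuous_id
    exact (hcont.tendsto X).comp hG
  refine ⟨?_, ⟨X, hXso.1, hXso.2, hBi⟩, ?_⟩
  · -- part 1
    intro i t hind
    have h := indep_aux _ hind
    rw [hBG]
    exact Gmat_so _ _ h.1 (uvec_ne _ _ h.2)
  · -- part 3
    intro i j
    have h2 : Tendsto (fun t => C i * (C j)ᵀ * B j t) atTop (nhds (C i * X)) := by
      have hcont : Continuous fun M : Matrix (Fin 3) (Fin 3) ℝ => C i * (C j)ᵀ * M :=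
        continuous_const.matrix_mul continuous_id
      have := (hcont.tendsto (C j * X)).comp (hBi j)
      have he : C i * (C j)ᵀ * (C j * X) = C i * X := by
        rw [Matrix.mul_assoc (C i) ((C j)ᵀ) (C j * X), ← Matrix.mul_assoc ((C j)ᵀ) (C j) X,
          hC j, Matrix.one_mul]
      rwa [he] at this
    have := (hBi i).sub h2
    simpa using this
end

section
/- Let C_1,…,C_N be n×n real orthogonal matrices, let G be a weighted directed graph on {1,…,N} with nonnegative weights a_{ij} having a rooted-out branch, and define the block matrix H ∈ ℝ^{nN×nN} with n×n blocks H_{ij} = a_{ij} C_i C_j^T for i ≠ j with a_{ij} > 0, H_{ij} = 0 for i ≠ j with a_{ij} = 0, and H_{ii} = −(Σ_{j≠i} a_{ij}) I_n. Then every eigenvalue of H has strictly negative real part except for the eigenvalue 0, which has algebraic multiplicity exactly n. -/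
open Matrix

/-- The block matrix `H` with `n×n` blocks `H_{ij} = a_{ij} C_i C_jᵀ` for `i ≠ j`
(which is `0` when `a_{ij} = 0`), and `H_{ii} = −(∑_{j≠i} a_{ij}) Iₙ`. -/
def blockH {N n : ℕ} (a : Fin N → Fin N → ℝ) (C : Fin N → Matrix (Fin n) (Fin n) ℝ) :
    Matrix (Fin N × Fin n) (Fin N × Fin n) ℝ :=
  Matrix.of fun p q =>
    if p.1 = q.1 then
      -(∑ j ∈ Finset.univ.erase p.1, a p.1 j) * (1 : Matrix (Fin n) (Fin n) ℝ) p.2 q.2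
    else a p.1 q.1 * (C p.1 * (C q.1)ᵀ) p.2 q.2

namespace BlockHAux

open Polynomial Finset

/-- The negated Laplacian. -/
def Bmat {N : ℕ} (a : Fin N → Fin N → ℝ) : Matrix (Fin N) (Fin N) ℝ :=
  Matrix.of fun i j => if i = j then -(∑ k ∈ Finset.univ.erase i, a i k) else a i j

/-- The block-diagonal matrix with blocks `C i`. -/
def Dmat {N n : ℕ} (C : Fin N → Matrix (Fin n) (Fin n) ℝ) :
    Matrix (Fin N × Fin n) (Fin N × Fin n) ℝ :=
  Matrix.of fun p q => if p.1 = q.1 then C p.1 p.2 q.2 else 0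

section conj

variable {N n : ℕ} (a : Fin N → Fin N → ℝ) (C : Fin N → Matrix (Fin n) (Fin n) ℝ)

theorem Dmat_orth (hC : ∀ i, (C i)ᵀ * C i = 1) : (Dmat C)ᵀ * Dmat C = 1 := by
  ext ⟨i, p⟩ ⟨j, q⟩
  simp only [Matrix.mul_apply, Dmat, transpose_apply, of_apply, Fintype.sum_prod_type]
  rcases eq_or_ne i j with rfl | hij
  · have := congrFun (congrFun (hC i) p) q
    simp only [Matrix.mul_apply, transpose_apply] at this
    simp only [one_apply]
    rw [Finset.sum_eq_single i]
    · simpa [Prod.ext_iff, one_apply] using this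
    · intro k _ hk
      simp [hk]
    · simp
  · rw [Finset.sum_eq_zero]
    · simp [Prod.ext_iff, hij]
    · intro k _
      by_cases hkj : k = j
      · subst hkj
        have hki : k ≠ i := fun h => hij (h ▸ rfl)
        apply Finset.sum_eq_zero
        intro s _
        rw [if_neg hki, zero_mul]
      · apply Finset.sum_eq_zero
        intro s _
        rw [if_neg hkj, mul_zero]

theorem blockH_eq_conj (hC : ∀ i, (C i)ᵀ * C i = 1) :
    blockH a C = Dmat C * Matrix.blockDiagonal (fun _ : Fin n => Bmat a) * (Dmat C)ᵀ := by
  have hC' : ∀ i, C i * (C i)ᵀ = 1 := fun i => mul_eq_one_comm.mp (hC i)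
  ext ⟨i, p⟩ ⟨j, q⟩
  have hDB : ∀ k : Fin N, ∀ r : Fin n,
      (Dmat C * Matrix.blockDiagonal (fun _ : Fin n => Bmat a)) (i, p) (k, r)
        = C i p r * Bmat a i k := by
    intro k r
    rw [Matrix.mul_apply, Fintype.sum_prod_type]
    rw [Finset.sum_eq_single i (fun l _ hl => Finset.sum_eq_zero fun s _ => by
      simp [Dmat, Ne.symm hl]) (by simp)]
    rw [Finset.sum_eq_single r (fun s _ hs => by simp [Dmat, blockDiagonal_apply, hs]) (by simp)]
    simp [Dmat, blockDiagonal_apply]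
  rw [Matrix.mul_apply, Fintype.sum_prod_type]
  have htr : ∀ k : Fin N, ∀ r : Fin n,
      (Dmat C)ᵀ (k, r) (j, q) = if j = k then C j q r else 0 := fun k r => rfl
  rw [Finset.sum_eq_single j (fun k _ hk => Finset.sum_eq_zero fun r _ => by
    rw [htr, if_neg (Ne.symm hk), mul_zero]) (by simp)]
  have hsum : (∑ r : Fin n,
      (Dmat C * Matrix.blockDiagonal fun _ : Fin n => Bmat a) (i, p) (j, r)
        * (Dmat C)ᵀ (j, r) (j, q))
      = Bmat a i j * ∑ r : Fin n, C i p r * C j q r := by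
    rw [Finset.mul_sum]
    refine Finset.sum_congr rfl fun r _ => ?_
    rw [hDB, htr, if_pos rfl]; ring
  rw [hsum]
  have hmul : ∀ k : Fin N, (C i * (C k)ᵀ) p q = ∑ r : Fin n, C i p r * C k q r := by
    intro k
    rw [Matrix.mul_apply]
    exact Finset.sum_congr rfl fun r _ => rfl
  show blockH a C (i, p) (j, q) = _
  rcases eq_or_ne i j with rfl | hij
  · have h1 : (∑ r : Fin n, C i p r * C i q r) = (1 : Matrix (Fin n) (Fin n) ℝ) p q := by
      rw [← hmul i, hC' i]
    rw [h1]
    simp [blockH, Bmat]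
  · have h1 : (∑ r : Fin n, C i p r * C j q r) = (C i * (C j)ᵀ) p q := (hmul j).symm
    rw [h1]
    simp [blockH, Bmat, hij]

end conj

section charpolyLemmas

variable {m o R S : Type*} [Fintype m] [DecidableEq m] [Fintype o] [DecidableEq o]
  [CommRing R] [CommRing S]

theorem charpoly_conj (P Q M : Matrix m m R) (h1 : P * Q = 1) :
    (P * M * Q).charpoly = M.charpoly := by
  have hP : P.map Polynomial.C * Q.map Polynomial.C = 1 := by
    rw [← Matrix.map_mul, h1]
    ext i j
    simp [Matrix.one_apply, apply_ite Polynomial.C]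
  have hscal : (Matrix.scalar m (Polynomial.X : R[X])) = (Polynomial.X : R[X]) • 1 := by
    ext i j
    simp [Matrix.scalar_apply, Matrix.one_apply, Matrix.diagonal_apply, apply_ite]
  have key : charmatrix (P * M * Q)
      = P.map Polynomial.C * charmatrix M * Q.map Polynomial.C := by
    unfold charmatrix
    rw [Matrix.mul_sub, Matrix.sub_mul]
    congr 1
    · rw [hscal, Matrix.mul_smul, Matrix.mul_one, Matrix.smul_mul, hP]
    · simp only [RingHom.mapMatrix_apply]
      rw [Matrix.map_mul, Matrix.map_mul]
  rw [Matrix.charpoly, key, Matrix.det_mul, Matrix.det_mul, Matrix.charpoly]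
  have : (P.map Polynomial.C).det * (Q.map Polynomial.C).det = 1 := by
    rw [← Matrix.det_mul, hP, Matrix.det_one]
  calc (P.map Polynomial.C).det * (charmatrix M).det * (Q.map Polynomial.C).det
      = (charmatrix M).det * ((P.map Polynomial.C).det * (Q.map Polynomial.C).det) := by ring
    _ = (charmatrix M).det := by rw [this, mul_one]

theorem charmatrix_blockDiagonal (M : o → Matrix m m R) :
    charmatrix (Matrix.blockDiagonal M)
      = Matrix.blockDiagonal (fun k => charmatrix (M k)) := by
  ext ⟨i, p⟩ ⟨j, q⟩
  rcases eq_or_ne p q with rfl | hpq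
  · rcases eq_or_ne i j with rfl | hij
    · simp [blockDiagonal_apply]
    · simp [blockDiagonal_apply, charmatrix_apply, Matrix.diagonal_apply, Prod.ext_iff, hij]
  · simp [blockDiagonal_apply, charmatrix_apply, Matrix.diagonal_apply, Prod.ext_iff, hpq]

theorem charpoly_blockDiagonal (M : o → Matrix m m R) :
    (Matrix.blockDiagonal M).charpoly = ∏ k : o, (M k).charpoly := by
  rw [Matrix.charpoly, charmatrix_blockDiagonal, Matrix.det_blockDiagonal]
  rfl

theorem eval_charpoly' (M : Matrix m m R) (μ : R) :
    M.charpoly.eval μ = (Matrix.scalar m μ - M).det := by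
  rw [Matrix.charpoly, _root_.eval_det, matPolyEquiv_charmatrix]
  rw [Polynomial.eval_sub, Polynomial.eval_X, Polynomial.eval_C]

end charpolyLemmas

section realcharpoly

variable {N n : ℕ} (a : Fin N → Fin N → ℝ) (C : Fin N → Matrix (Fin n) (Fin n) ℝ)

theorem blockH_charpoly (hC : ∀ i, (C i)ᵀ * C i = 1) :
    (blockH a C).charpoly = (Bmat a).charpoly ^ n := by
  rw [blockH_eq_conj a C hC, charpoly_conj _ _ _ (mul_eq_one_comm.mp (Dmat_orth C hC)),
    charpoly_blockDiagonal]
  simp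

end realcharpoly

section kernel

variable {N : ℕ} {a : Fin N → Fin N → ℝ}

theorem row_eq (a : Fin N → Fin N → ℝ) (u : Fin N → ℝ) (i : Fin N) :
    (Bmat a).mulVec u i
      = -(∑ k ∈ Finset.univ.erase i, a i k) * u i
        + ∑ j ∈ Finset.univ.erase i, a i j * u j := by
  rw [Matrix.mulVec, dotProduct]
  rw [← Finset.sum_erase_add _ _ (Finset.mem_univ i)]
  rw [add_comm]
  congr 1
  · simp [Bmat]
  · refine Finset.sum_congr rfl fun j hj => ?_
    have : i ≠ j := fun h => (Finset.mem_erase.mp hj).1 h.symm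
    simp [Bmat, this]

/-- max principle: if `B u` is the constant vector `t`, then `t ≤ 0`. -/
theorem key2 (ha : ∀ i j, 0 ≤ a i j) [Nonempty (Fin N)] (u : Fin N → ℝ) (t : ℝ)
    (hu : ∀ i, (Bmat a).mulVec u i = t) : t ≤ 0 := by
  obtain ⟨i0, hmax⟩ := Finite.exists_max u
  have h := hu i0
  rw [row_eq] at h
  have hle : ∑ j ∈ Finset.univ.erase i0, a i0 j * u j
      ≤ ∑ j ∈ Finset.univ.erase i0, a i0 j * u i0 :=
    Finset.sum_le_sum fun j _ => mul_le_mul_of_nonneg_left (hmax j) (ha _ _)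
  rw [← Finset.sum_mul] at hle
  linarith

/-- if `B u = 0` and the graph has a rooted-out branch at `r`, then `u ≤ u r`. -/
theorem key_le (ha : ∀ i j, 0 ≤ a i j) (r : Fin N)
    (hroot : ∀ v : Fin N, Relation.ReflTransGen (fun u v => 0 < a v u) r v)
    (u : Fin N → ℝ) (hu : ∀ i, (Bmat a).mulVec u i = 0) : ∀ v, u v ≤ u r := by
  have : Nonempty (Fin N) := ⟨r⟩
  obtain ⟨i0, hmax⟩ := Finite.exists_max u
  have closure : ∀ i, u i = u i0 → ∀ j, 0 < a i j → u j = u i0 := by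
    intro i hi j haij
    rcases eq_or_ne j i with rfl | hji
    · exact hi
    have h := hu i
    rw [row_eq] at h
    have hsum : ∑ j' ∈ Finset.univ.erase i, a i j' * (u i0 - u j') = 0 := by
      have expand : ∑ j' ∈ Finset.univ.erase i, a i j' * (u i0 - u j')
          = (∑ j' ∈ Finset.univ.erase i, a i j') * u i0
            - ∑ j' ∈ Finset.univ.erase i, a i j' * u j' := by
        rw [Finset.sum_mul, ← Finset.sum_sub_distrib]
        exact Finset.sum_congr rfl fun j' _ => by ring
      rw [expand, ← hi]
      linarith
    have each := (Finset.sum_eq_zero_iff_of_nonneg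
      (fun j' _ => mul_nonneg (ha _ _) (sub_nonneg.mpr (hmax j')))).mp hsum
    have hj := each j (Finset.mem_erase.mpr ⟨hji, Finset.mem_univ j⟩)
    have := mul_eq_zero.mp hj
    rcases this with h' | h'
    · exact absurd h' (ne_of_gt haij)
    · linarith [sub_eq_zero.mp h']
  have hr : ∀ w, Relation.ReflTransGen (fun x y => 0 < a y x) w i0 → u w = u i0 := by
    intro w hw
    induction hw using Relation.ReflTransGen.head_induction_on with
    | refl => rfl
    | head hbc _ ih => exact closure _ ih _ hbc
  intro v
  rw [hr r (hroot i0)]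
  exact hmax v

theorem key_eq (ha : ∀ i j, 0 ≤ a i j) (r : Fin N)
    (hroot : ∀ v : Fin N, Relation.ReflTransGen (fun u v => 0 < a v u) r v)
    (u : Fin N → ℝ) (hu : ∀ i, (Bmat a).mulVec u i = 0) : ∀ v, u v = u r := by
  intro v
  have h1 := key_le ha r hroot u hu v
  have hu' : ∀ i, (Bmat a).mulVec (-u) i = 0 := by
    intro i
    rw [Matrix.mulVec_neg]
    simp [hu i]
  have h2 := key_le ha r hroot (-u) hu' v
  simp only [Pi.neg_apply, neg_le_neg_iff] at h2
  linarith

end kernel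

section complexSide

variable {N : ℕ} (a : Fin N → Fin N → ℝ)

/-- The complexified negated Laplacian. -/
noncomputable def Bc (a : Fin N → Fin N → ℝ) : Matrix (Fin N) (Fin N) ℂ :=
  (Bmat a).map Complex.ofReal

theorem mulVec_re (x : Fin N → ℂ) (i : Fin N) :
    ((Bc a).mulVec x i).re = (Bmat a).mulVec (fun j => (x j).re) i := by
  simp only [Bc, Matrix.mulVec, dotProduct, Matrix.map_apply]
  rw [Complex.re_sum]
  exact Finset.sum_congr rfl fun j _ => by simp [Complex.mul_re]

theorem mulVec_im (x : Fin N → ℂ) (i : Fin N) :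
    ((Bc a).mulVec x i).im = (Bmat a).mulVec (fun j => (x j).im) i := by
  simp only [Bc, Matrix.mulVec, dotProduct, Matrix.map_apply]
  rw [Complex.im_sum]
  exact Finset.sum_congr rfl fun j _ => by simp [Complex.mul_im]

theorem rowsum_zero (i : Fin N) : (Bmat a).mulVec (fun _ => (1 : ℝ)) i = 0 := by
  rw [row_eq]
  simp

theorem ker_const {r : Fin N}
    (ha : ∀ i j, 0 ≤ a i j)
    (hroot : ∀ v : Fin N, Relation.ReflTransGen (fun u v => 0 < a v u) r v)
    (x : Fin N → ℂ) (hx : (Bc a).mulVec x = 0) : x = fun _ => x r := by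
  have hre : ∀ i, (Bmat a).mulVec (fun j => (x j).re) i = 0 := by
    intro i
    rw [← mulVec_re, congrFun hx i]
    rfl
  have him : ∀ i, (Bmat a).mulVec (fun j => (x j).im) i = 0 := by
    intro i
    rw [← mulVec_im, congrFun hx i]
    rfl
  funext v
  exact Complex.ext (key_eq ha r hroot _ hre v) (key_eq ha r hroot _ him v)

theorem const_zero [Nonempty (Fin N)] (ha : ∀ i j, 0 ≤ a i j)
    (x : Fin N → ℂ) (c : ℂ) (hx : (Bc a).mulVec x = fun _ => c) : c = 0 := by
  have hre : ∀ i, (Bmat a).mulVec (fun j => (x j).re) i = c.re := by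
    intro i
    rw [← mulVec_re, congrFun hx i]
  have him : ∀ i, (Bmat a).mulVec (fun j => (x j).im) i = c.im := by
    intro i
    rw [← mulVec_im, congrFun hx i]
  have h1 : c.re ≤ 0 := key2 ha _ _ hre
  have h2 : c.im ≤ 0 := key2 ha _ _ him
  have hre' : ∀ i, (Bmat a).mulVec (-(fun j => (x j).re)) i = -c.re := by
    intro i
    rw [Matrix.mulVec_neg, Pi.neg_apply, hre]
  have him' : ∀ i, (Bmat a).mulVec (-(fun j => (x j).im)) i = -c.im := by
    intro i
    rw [Matrix.mulVec_neg, Pi.neg_apply, him]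
  have h3 : -c.re ≤ 0 := key2 ha _ _ hre'
  have h4 : -c.im ≤ 0 := key2 ha _ _ him'
  apply Complex.ext <;> simp <;> linarith

theorem maxGen_eq {r : Fin N}
    (ha : ∀ i j, 0 ≤ a i j)
    (hroot : ∀ v : Fin N, Relation.ReflTransGen (fun u v => 0 < a v u) r v) :
    Module.End.maxGenEigenspace (Matrix.toLin' (Bc a)) 0
      = (Submodule.span ℂ {(fun _ => (1 : ℂ) : Fin N → ℂ)}) := by
  have : Nonempty (Fin N) := ⟨r⟩
  set φ := Matrix.toLin' (Bc a) with hφ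
  have hφ1 : φ (fun _ => (1 : ℂ)) = 0 := by
    rw [hφ, Matrix.toLin'_apply]
    funext i
    have : ((Bc a).mulVec (fun _ => (1 : ℂ)) i).re = 0 := by
      rw [mulVec_re]
      simpa using rowsum_zero a i
    have h2 : ((Bc a).mulVec (fun _ => (1 : ℂ)) i).im = 0 := by
      rw [mulVec_im]
      simp [Matrix.mulVec, dotProduct]
    exact Complex.ext (by simpa using this) (by simpa using h2)
  have hker : ∀ y : Fin N → ℂ, φ y = 0 →
      y ∈ Submodule.span ℂ {(fun _ => (1 : ℂ) : Fin N → ℂ)} := by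
    intro y hy
    rw [hφ, Matrix.toLin'_apply] at hy
    have := ker_const a ha hroot y hy
    rw [Submodule.mem_span_singleton]
    exact ⟨y r, by rw [this]; funext v; simp⟩
  have hker2 : ∀ y : Fin N → ℂ, φ (φ y) = 0 → φ y = 0 := by
    intro y hy
    obtain ⟨c, hc⟩ := Submodule.mem_span_singleton.mp (hker _ hy)
    have hc' : (Bc a).mulVec y = fun _ => c := by
      rw [← Matrix.toLin'_apply, ← hφ, ← hc]
      funext v
      simp
    have hc0 := const_zero a ha y c hc'
    rw [← hc, hc0, zero_smul]
  have hpow : ∀ k : ℕ, ∀ y : Fin N → ℂ, (φ ^ (k + 1)) y = 0 → φ y = 0 := by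
    intro k
    induction k with
    | zero => intro y hy; simpa using hy
    | succ k ih =>
      intro y hy
      have : (φ ^ (k + 1)) (φ y) = 0 := by
        rw [← Module.End.mul_apply, ← pow_succ]
        exact hy
      exact hker2 y (ih (φ y) this)
  ext x
  rw [Module.End.mem_maxGenEigenspace]
  simp only [zero_smul, sub_zero]
  constructor
  · rintro ⟨k, hk⟩
    cases k with
    | zero =>
      simp only [pow_zero, Module.End.one_apply] at hk
      rw [hk]
      exact Submodule.zero_mem _
    | succ k => exact hker _ (hpow k x hk)
  · intro hx
    obtain ⟨c, hc⟩ := Submodule.mem_span_singleton.mp hx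
    exact ⟨1, by rw [pow_one, ← hc, _root_.map_smul, hφ1, smul_zero]⟩

end complexSide

end BlockHAux




/-- for orthogonal `C₁,…,C_N` and a graph with a rooted-out branch, every
eigenvalue of `H` has strictly negative real part except the eigenvalue `0`, which has
algebraic multiplicity exactly `n`. -/
theorem blockH_spectrum
    (N n : ℕ) (a : Fin N → Fin N → ℝ) (ha : ∀ i j, 0 ≤ a i j)
    (hroot : hasRootedOutBranch a)
    (C : Fin N → Matrix (Fin n) (Fin n) ℝ)
    (hC : ∀ i, (C i)ᵀ * C i = 1) :
    (∀ μ : ℂ, ((blockH a C).map (Complex.ofReal)).charpoly.IsRoot μ → μ = 0 ∨ μ.re < 0) ∧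
    ((blockH a C).map (Complex.ofReal)).charpoly.rootMultiplicity 0 = n := by
  classical
  obtain ⟨r, hroot'⟩ := hroot
  have hNe : Nonempty (Fin N) := ⟨r⟩
  have hmap : (blockH a C).map Complex.ofReal
      = (blockH a C).map (Complex.ofRealHom : ℝ →+* ℂ) := rfl
  have hBc : BlockHAux.Bc a = (BlockHAux.Bmat a).map (Complex.ofRealHom : ℝ →+* ℂ) := rfl
  have hq : ((blockH a C).map Complex.ofReal).charpoly = (BlockHAux.Bc a).charpoly ^ n := by
    rw [hmap, Matrix.charpoly_map, BlockHAux.blockH_charpoly a C hC, Polynomial.map_pow, hBc,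
      Matrix.charpoly_map]
  have hq0 : (BlockHAux.Bc a).charpoly ≠ 0 := (Matrix.charpoly_monic _).ne_zero
  constructor
  · intro μ hμ
    rw [hq] at hμ
    have hn : n ≠ 0 := by
      rintro rfl
      simp [Polynomial.IsRoot] at hμ
    have hroot2 : (BlockHAux.Bc a).charpoly.IsRoot μ := by
      have h' := hμ
      rw [Polynomial.IsRoot, Polynomial.eval_pow] at h'
      exact (pow_eq_zero_iff hn).mp h'
    have hdet : (Matrix.scalar (Fin N) μ - BlockHAux.Bc a).det = 0 := by
      rw [← BlockHAux.eval_charpoly']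
      exact hroot2
    obtain ⟨v, hv0, hv⟩ := (Matrix.exists_mulVec_eq_zero_iff).mpr hdet
    have hmv : (BlockHAux.Bc a).mulVec v = μ • v := by
      rw [Matrix.sub_mulVec] at hv
      have hscal : (Matrix.scalar (Fin N) μ).mulVec v = μ • v := by
        funext i
        simp [Matrix.mulVec, dotProduct, Matrix.scalar_apply, Matrix.diagonal,
          Finset.sum_ite_eq]
      have hsub := sub_eq_zero.mp hv
      rw [← hsub, hscal]
    have heig : Module.End.HasEigenvalue (Matrix.toLin' (BlockHAux.Bc a)) μ := by
      apply Module.End.hasEigenvalue_of_hasEigenvector (x := v)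
      exact ⟨Module.End.mem_eigenspace_iff.mpr (by rw [Matrix.toLin'_apply, hmv]), hv0⟩
    obtain ⟨k, hk⟩ := eigenvalue_mem_ball heig
    set sk := ∑ j ∈ Finset.univ.erase k, a k j with hsk
    have hs0 : 0 ≤ sk := Finset.sum_nonneg fun j _ => ha k j
    have hdiag : BlockHAux.Bc a k k = ((-sk : ℝ) : ℂ) := by
      simp [BlockHAux.Bc, BlockHAux.Bmat, hsk]
    have hrad : (∑ j ∈ Finset.univ.erase k, ‖BlockHAux.Bc a k j‖) = sk := by
      refine Finset.sum_congr rfl fun j hj => ?_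
      have hkj : k ≠ j := fun h => (Finset.mem_erase.mp hj).1 h.symm
      simp [BlockHAux.Bc, BlockHAux.Bmat, hkj, Complex.norm_real, Real.norm_eq_abs,
        abs_of_nonneg (ha k j)]
    rw [hdiag, hrad] at hk
    rw [Metric.mem_closedBall, Complex.dist_eq] at hk
    have habs : ‖μ + sk‖ ≤ sk := by
      simpa [Complex.ofReal_neg, sub_neg_eq_add] using hk
    have hsq : (μ.re + sk) ^ 2 + μ.im ^ 2 ≤ sk ^ 2 := by
      have h2 : ‖μ + (sk : ℂ)‖ ^ 2 ≤ sk ^ 2 :=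
        pow_le_pow_left₀ (norm_nonneg _) habs 2
      rw [Complex.sq_norm, Complex.normSq_apply] at h2
      simpa [pow_two] using h2
    by_cases hre : μ.re < 0
    · right; exact hre
    · left
      push_neg at hre
      have h1 : μ.re = 0 := by nlinarith
      have h2 : μ.im = 0 := by nlinarith
      exact Complex.ext h1 h2
  · rw [hq]
    have hch : (Matrix.toLin' (BlockHAux.Bc a)).charpoly = (BlockHAux.Bc a).charpoly := by
      rw [← LinearMap.charpoly_toMatrix (Matrix.toLin' (BlockHAux.Bc a)) (Pi.basisFun ℂ (Fin N)),
        LinearMap.toMatrix_eq_toMatrix', LinearMap.toMatrix'_toLin']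
    have hne : ((fun _ => (1 : ℂ)) : Fin N → ℂ) ≠ 0 := by
      intro h
      have := congrFun h r
      simp at this
    have hmult1 : (BlockHAux.Bc a).charpoly.rootMultiplicity 0 = 1 := by
      rw [Polynomial.rootMultiplicity_eq_natTrailingDegree', ← hch,
        ← LinearMap.finrank_maxGenEigenspace_zero_eq, BlockHAux.maxGen_eq a ha hroot',
        finrank_span_singleton hne]
    have hpowmult : ∀ m : ℕ, ((BlockHAux.Bc a).charpoly ^ m).rootMultiplicity 0 = m := by
      intro m
      induction m with
      | zero =>
        simp only [pow_zero]
        apply Polynomial.rootMultiplicity_eq_zero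
        simp [Polynomial.IsRoot]
      | succ m ih =>
        rw [pow_succ, Polynomial.rootMultiplicity_mul
          (mul_ne_zero (pow_ne_zero _ hq0) hq0), ih, hmult1]
    exact hpowmult n
end
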